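/- arXiv:1304.5001 — 9 statements merged into one kernel-verified Lean document; each statement's English description precedes it below -/
import Mathlib

section
/- Let Y be a mean zero random variable with variance σ² ∈ (0,∞), and let Y* be defined on the same probability space and have the Y-zero biased distribution. Suppose Y* − Y ≤ c almost surely for some constant c > 0, and that the moment generating function m(s) = E[exp(sY)] is finite for all s ∈ [0, 1/c). Then for all t ≥ 0, P(Y ≥ t) ≤ exp(−t² / (2(σ² + ct))). -/
open MeasureTheory ProbabilityTheory Real Topology Filter

lemma zb_exp_le {p q v y : ℝ} (hpv : p ≤ v) (hvq : v ≤ q) :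
    exp (v * y) ≤ exp (p * y) + exp (q * y) := by
  rcases le_or_gt 0 y with hy | hy
  · have : v * y ≤ q * y := mul_le_mul_of_nonneg_right hvq hy
    calc exp (v * y) ≤ exp (q * y) := exp_le_exp.mpr this
      _ ≤ exp (p * y) + exp (q * y) := le_add_of_nonneg_left (exp_pos _).le
  · have : v * y ≤ p * y := mul_le_mul_of_nonpos_right hpv hy.le
    calc exp (v * y) ≤ exp (p * y) := exp_le_exp.mpr this
      _ ≤ exp (p * y) + exp (q * y) := le_add_of_nonneg_right (exp_pos _).le

lemma zb_abs_le {δ y : ℝ} (hδ : 0 < δ) :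
    |y| ≤ δ⁻¹ * (exp (δ * y) + exp (-δ * y)) := by
  have h1 : δ * |y| ≤ exp (δ * |y|) := by
    have := Real.add_one_le_exp (δ * |y|); linarith
  have h2 : exp (δ * |y|) ≤ exp (δ * y) + exp (-δ * y) := by
    rcases abs_cases y with ⟨h, _⟩ | ⟨h, _⟩
    · rw [h]; exact le_add_of_nonneg_right (exp_pos _).le
    · rw [h, mul_neg, ← neg_mul]; exact le_add_of_nonneg_left (exp_pos _).le
  rw [inv_mul_eq_div, le_div_iff₀ hδ]
  calc |y| * δ = δ * |y| := mul_comm _ _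
    _ ≤ _ := h1.trans h2

lemma zb_deriv {Ω : Type*} [MeasurableSpace Ω] (μ : Measure Ω) [IsProbabilityMeasure μ]
    (Y : Ω → ℝ) (hY : Measurable Y) (r : ℝ)
    (hmgf : ∀ s ∈ Set.Ico (0 : ℝ) r, Integrable (fun ω => exp (s * Y ω)) μ)
    (u0 : ℝ) (h0 : 0 < u0) (h1 : u0 < r) :
    Integrable (fun ω => Y ω * exp (u0 * Y ω)) μ ∧
      HasDerivAt (fun u => ∫ ω, exp (u * Y ω) ∂μ)
        (∫ ω, Y ω * exp (u0 * Y ω) ∂μ) u0 := by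
  set ε := min (u0 / 2) ((r - u0) / 3) with hε
  have hεpos : 0 < ε := lt_min (by linarith) (by linarith)
  have hε1 : 2 * ε ≤ u0 := by
    have := min_le_left (u0 / 2) ((r - u0) / 3); linarith [hε ▸ this]
  have hε2 : 3 * ε ≤ r - u0 := by
    have := min_le_right (u0 / 2) ((r - u0) / 3); linarith [hε ▸ this]
  have hp : (0:ℝ) ≤ u0 - 2 * ε := by linarith
  have hq : u0 + 2 * ε < r := by linarith
  have hbint : Integrable
      (fun ω => ε⁻¹ * 2 * (exp ((u0 - 2*ε) * Y ω) + exp ((u0 + 2*ε) * Y ω))) μ :=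
    (((hmgf _ ⟨hp, by linarith⟩).add (hmgf _ ⟨by linarith, hq⟩))).const_mul _
  have key := hasDerivAt_integral_of_dominated_loc_of_deriv_le (μ := μ)
    (F := fun u ω => exp (u * Y ω)) (F' := fun u ω => Y ω * exp (u * Y ω))
    (x₀ := u0)
    (bound := fun ω => ε⁻¹ * 2 * (exp ((u0 - 2*ε) * Y ω) + exp ((u0 + 2*ε) * Y ω)))
    (Metric.ball_mem_nhds u0 hεpos)
    (Filter.Eventually.of_forall fun u =>
      ((measurable_exp.comp (hY.const_mul u)).aestronglyMeasurable))
    (hmgf u0 ⟨h0.le, h1⟩)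
    ((hY.mul (measurable_exp.comp (hY.const_mul u0))).aestronglyMeasurable)
    (Filter.Eventually.of_forall fun ω => ?_)
    hbint
    (Filter.Eventually.of_forall fun ω => ?_)
  · exact key
  · -- bound
    intro u hu
    rw [Metric.mem_ball, Real.dist_eq] at hu
    have hub1 : u0 - 2*ε ≤ u + ε := by cases abs_lt.mp hu; linarith
    have hub2 : u + ε ≤ u0 + 2*ε := by cases abs_lt.mp hu; linarith
    have hub3 : u0 - 2*ε ≤ u - ε := by cases abs_lt.mp hu; linarith
    have hub4 : u - ε ≤ u0 + 2*ε := by cases abs_lt.mp hu; linarith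
    have habs : |Y ω| ≤ ε⁻¹ * (exp (ε * Y ω) + exp (-ε * Y ω)) := zb_abs_le hεpos
    have hnn : (0:ℝ) < exp (u * Y ω) := exp_pos _
    calc ‖Y ω * exp (u * Y ω)‖ = |Y ω| * exp (u * Y ω) := by
          rw [norm_mul, Real.norm_eq_abs, Real.norm_eq_abs, abs_exp]
      _ ≤ (ε⁻¹ * (exp (ε * Y ω) + exp (-ε * Y ω))) * exp (u * Y ω) :=
          mul_le_mul_of_nonneg_right habs hnn.le
      _ = ε⁻¹ * (exp ((u + ε) * Y ω) + exp ((u - ε) * Y ω)) := by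
          rw [mul_assoc, add_mul, ← exp_add, ← exp_add]; ring_nf
      _ ≤ ε⁻¹ * 2 * (exp ((u0 - 2*ε) * Y ω) + exp ((u0 + 2*ε) * Y ω)) := by
          have b1 := zb_exp_le (y := Y ω) hub1 hub2
          have b2 := zb_exp_le (y := Y ω) hub3 hub4
          have hinv : (0:ℝ) ≤ ε⁻¹ := (inv_pos.mpr hεpos).le
          nlinarith [exp_pos ((u0 - 2*ε) * Y ω), exp_pos ((u0 + 2*ε) * Y ω)]
  · -- differentiability
    intro u _
    have h := (Real.hasDerivAt_exp (u * Y ω)).comp u ((hasDerivAt_id u).mul_const (Y ω))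
    exact h.congr_deriv (by ring)

/-- `Ystar` has the `Y`-zero biased distribution with respect to variance `σ2`:
`E[Y f(Y)] = σ2 * E[f'(Ystar)]` for every (absolutely continuous) differentiable
function `f` with derivative `f'` for which both expectations exist. -/
def ZeroBiased {Ω : Type*} [MeasurableSpace Ω] (μ : Measure Ω)
    (Y Ystar : Ω → ℝ) (σ2 : ℝ) : Prop :=
  ∀ f f' : ℝ → ℝ, (∀ x, HasDerivAt f (f' x) x) →
    Integrable (fun ω => Y ω * f (Y ω)) μ →
    Integrable (fun ω => f' (Ystar ω)) μ →
    ∫ ω, Y ω * f (Y ω) ∂μ = σ2 * ∫ ω, f' (Ystar ω) ∂μ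

theorem zero_bias_right_tail
    {Ω : Type*} [MeasurableSpace Ω] (μ : Measure Ω) [IsProbabilityMeasure μ]
    (Y Ystar : Ω → ℝ) (hY : Measurable Y) (hYstar : Measurable Ystar)
    (σ2 : ℝ) (hσ2 : 0 < σ2)
    (hmean : ∫ ω, Y ω ∂μ = 0) (hL2 : MemLp Y 2 μ) (hvar : variance Y μ = σ2)
    (hzb : ZeroBiased μ Y Ystar σ2)
    (c : ℝ) (hc : 0 < c) (hbdd : ∀ᵐ ω ∂μ, Ystar ω - Y ω ≤ c)
    (hmgf : ∀ s ∈ Set.Ico (0 : ℝ) (1 / c), Integrable (fun ω => exp (s * Y ω)) μ) :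
    ∀ t : ℝ, 0 ≤ t →
      (μ {ω | t ≤ Y ω}).toReal ≤ exp (-(t ^ 2) / (2 * (σ2 + c * t))) := by
  intro t ht
  rcases ht.eq_or_lt with h0 | ht'
  · subst h0
    have hle1 : (μ {ω | (0:ℝ) ≤ Y ω}).toReal ≤ 1 := by
      calc (μ {ω | (0:ℝ) ≤ Y ω}).toReal ≤ (μ Set.univ).toReal :=
            ENNReal.toReal_mono (measure_ne_top _ _) (measure_mono (Set.subset_univ _))
        _ = 1 := by simp
    calc (μ {ω | (0:ℝ) ≤ Y ω}).toReal ≤ 1 := hle1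
      _ ≤ exp (-((0:ℝ) ^ 2) / (2 * (σ2 + c * 0))) := by norm_num
  · set r : ℝ := 1 / c with hr
    have hrpos : 0 < r := by positivity
    set s : ℝ := t / (σ2 + c * t) with hs
    have hden : 0 < σ2 + c * t := by positivity
    have hs0 : 0 < s := div_pos ht' hden
    have hs1 : s < r := by
      rw [hs, hr, div_lt_div_iff₀ hden hc]
      nlinarith
    set m : ℝ → ℝ := fun u => ∫ ω, exp (u * Y ω) ∂μ with hm
    have hmpos : ∀ u, 0 ≤ u → u < r → 0 < m u := by
      intro u hu0 hu1
      exact mgf_pos (X := Y) (hmgf u ⟨hu0, hu1⟩)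
    -- integrability of exp (u * Ystar)
    have hstar_int : ∀ u, 0 ≤ u → u < r → Integrable (fun ω => exp (u * Ystar ω)) μ := by
      intro u hu0 hu1
      refine Integrable.mono' ((hmgf u ⟨hu0, hu1⟩).const_mul (exp (u * c)))
        (measurable_exp.comp (hYstar.const_mul u)).aestronglyMeasurable ?_
      filter_upwards [hbdd] with ω hω
      rw [Real.norm_eq_abs, abs_exp, ← exp_add]
      refine exp_le_exp.mpr ?_
      nlinarith [mul_le_mul_of_nonneg_left hω hu0]
    -- derivative bound
    have hds : ∀ u, 0 < u → u ≤ s →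
        HasDerivAt m (∫ ω, Y ω * exp (u * Y ω) ∂μ) u ∧
        (∫ ω, Y ω * exp (u * Y ω) ∂μ) ≤ σ2 * exp (s * c) * u * m u := by
      intro u hu0 hu1
      have hur : u < r := lt_of_le_of_lt hu1 hs1
      obtain ⟨hint, hderiv⟩ := zb_deriv μ Y hY r hmgf u hu0 hur
      have hstar := hstar_int u hu0.le hur
      have hf : ∀ x : ℝ, HasDerivAt (fun x => exp (u * x)) (u * exp (u * x)) x := by
        intro x
        have h := (Real.hasDerivAt_exp (u * x)).comp x ((hasDerivAt_id x).const_mul u)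
        exact h.congr_deriv (by simp; ring)
      have hzb_eq : ∫ ω, Y ω * exp (u * Y ω) ∂μ = σ2 * ∫ ω, u * exp (u * Ystar ω) ∂μ :=
        hzb _ _ hf hint (hstar.const_mul u)
      have hIstar_le : ∫ ω, exp (u * Ystar ω) ∂μ ≤ exp (u * c) * m u := by
        have hmono : ∫ ω, exp (u * Ystar ω) ∂μ ≤ ∫ ω, exp (u * c) * exp (u * Y ω) ∂μ := by
          refine integral_mono_ae hstar ((hmgf u ⟨hu0.le, hur⟩).const_mul _) ?_
          filter_upwards [hbdd] with ω hω
          rw [← exp_add]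
          refine exp_le_exp.mpr ?_
          nlinarith [mul_le_mul_of_nonneg_left hω hu0.le]
        calc ∫ ω, exp (u * Ystar ω) ∂μ ≤ ∫ ω, exp (u * c) * exp (u * Y ω) ∂μ := hmono
          _ = exp (u * c) * m u := integral_const_mul _ _
      have hIstar_nonneg : 0 ≤ ∫ ω, exp (u * Ystar ω) ∂μ :=
        integral_nonneg fun ω => (exp_pos _).le
      refine ⟨hderiv, ?_⟩
      rw [hzb_eq, integral_const_mul]
      have hec : exp (u * c) ≤ exp (s * c) :=
        exp_le_exp.mpr (mul_le_mul_of_nonneg_right hu1 hc.le)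
      have hmu : 0 < m u := hmpos u hu0.le hur
      calc σ2 * (u * ∫ ω, exp (u * Ystar ω) ∂μ)
          ≤ σ2 * (u * (exp (u * c) * m u)) := by
            refine mul_le_mul_of_nonneg_left ?_ hσ2.le
            exact mul_le_mul_of_nonneg_left hIstar_le hu0.le
        _ ≤ σ2 * (u * (exp (s * c) * m u)) := by
            refine mul_le_mul_of_nonneg_left ?_ hσ2.le
            refine mul_le_mul_of_nonneg_left ?_ hu0.le
            exact mul_le_mul_of_nonneg_right hec hmu.le
        _ = σ2 * exp (s * c) * u * m u := by ring
    -- continuity of m on [0, s]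
    have hcont : ContinuousOn m (Set.Icc 0 s) := by
      intro u hu
      rcases eq_or_lt_of_le hu.1 with h | h
    -- u = 0
      · rw [← h]
        have hlim : Filter.Tendsto m (nhdsWithin 0 (Set.Icc (0:ℝ) s)) (𝓝 (∫ ω, exp ((0:ℝ) * Y ω) ∂μ)) := by
          refine tendsto_integral_filter_of_dominated_convergence
            (fun ω => 1 + exp (s * Y ω))
            (Filter.Eventually.of_forall fun v =>
              (measurable_exp.comp (hY.const_mul v)).aestronglyMeasurable)
            ?_ ((integrable_const 1).add (hmgf s ⟨hs0.le, hs1⟩)) ?_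
          · filter_upwards [eventually_mem_nhdsWithin] with v hv
            refine Filter.Eventually.of_forall fun ω => ?_
            rw [Real.norm_eq_abs, abs_exp]
            have := zb_exp_le (y := Y ω) hv.1 hv.2
            simpa using this
          · refine Filter.Eventually.of_forall fun ω => ?_
            exact ((continuous_exp.comp (continuous_id.mul continuous_const)).tendsto 0).mono_left
              nhdsWithin_le_nhds
        exact hlim
      · exact ((hds u h hu.2).1.continuousAt).continuousWithinAt
    -- the function G
    set K : ℝ := σ2 * exp (s * c) with hK
    have hKpos : 0 < K := by positivity
    set G : ℝ → ℝ := fun u => Real.log (m u) - K * u ^ 2 / 2 with hG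
    have hGderiv : ∀ u, 0 < u → u < s →
        HasDerivAt G ((∫ ω, Y ω * exp (u * Y ω) ∂μ) / m u - K * u) u := by
      intro u hu0 hu1
      have hmu : 0 < m u := hmpos u hu0.le (lt_trans hu1 hs1)
      have h1 : HasDerivAt (fun u => Real.log (m u))
          ((∫ ω, Y ω * exp (u * Y ω) ∂μ) / m u) u :=
        (hds u hu0 hu1.le).1.log hmu.ne'
      have h2 : HasDerivAt (fun u : ℝ => K * u ^ 2 / 2) (K * u) u := by
        have h := ((hasDerivAt_pow 2 u).const_mul K).div_const 2
        refine h.congr_deriv ?_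
        push_cast
        ring
      exact h1.sub h2
    have hanti : AntitoneOn G (Set.Icc 0 s) := by
      refine antitoneOn_of_deriv_nonpos (convex_Icc 0 s) ?_ ?_ ?_
      · refine ContinuousOn.sub ?_ (by fun_prop)
        exact hcont.log fun u hu => (hmpos u hu.1 (lt_of_le_of_lt hu.2 hs1)).ne'
      · intro u hu
        rw [interior_Icc] at hu
        exact ((hGderiv u hu.1 hu.2).differentiableAt).differentiableWithinAt
      · intro u hu
        rw [interior_Icc] at hu
        rw [(hGderiv u hu.1 hu.2).deriv]
        have hmu : 0 < m u := hmpos u hu.1.le (lt_trans hu.2 hs1)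
        have hb := (hds u hu.1 hu.2.le).2
        rw [sub_nonpos, div_le_iff₀ hmu]
        calc (∫ ω, Y ω * exp (u * Y ω) ∂μ) ≤ σ2 * exp (s * c) * u * m u := hb
          _ = K * u * m u := by rw [hK]
    have hG0 : G 0 = 0 := by
      have hm0 : m 0 = 1 := by
        simp [hm]
      simp [hG, hm0]
    have hGs : G s ≤ 0 := by
      have := hanti (Set.left_mem_Icc.mpr hs0.le) (Set.right_mem_Icc.mpr hs0.le) hs0.le
      rw [hG0] at this
      exact this
    have hms : m s ≤ exp (K * s ^ 2 / 2) := by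
      have hmspos : 0 < m s := hmpos s hs0.le hs1
      rw [← Real.log_le_iff_le_exp hmspos]
      have : Real.log (m s) - K * s ^ 2 / 2 ≤ 0 := hGs
      linarith
    -- Chernoff bound
    have hch : (μ {ω | t ≤ Y ω}).toReal ≤ exp (-s * t) * mgf Y μ s :=
      measure_ge_le_exp_mul_mgf t hs0.le (hmgf s ⟨hs0.le, hs1⟩)
    have hmgfeq : mgf Y μ s = m s := rfl
    -- final algebra
    have hst : s * (σ2 + c * t) = t := by
      rw [hs]; field_simp
    have hsc1 : s * c < 1 := by
      have h := mul_lt_mul_of_pos_right hs1 hc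
      rw [hr, one_div, inv_mul_cancel₀ hc.ne'] at h
      exact h
    have hKle : K ≤ σ2 + c * t := by
      have h1 : 1 - s * c ≤ exp (-(s * c)) := by
        have := Real.add_one_le_exp (-(s * c)); linarith
      have h2 : 0 < 1 - s * c := by linarith
      have hexp : exp (s * c) ≤ 1 / (1 - s * c) := by
        rw [exp_neg] at h1
        calc exp (s * c) = 1 / (exp (s * c))⁻¹ := by field_simp
          _ ≤ 1 / (1 - s * c) := one_div_le_one_div_of_le h2 h1
      have hfrac : 1 - s * c = σ2 / (σ2 + c * t) := by
        rw [hs]; field_simp; ring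
      rw [hK]
      calc σ2 * exp (s * c) ≤ σ2 * (1 / (1 - s * c)) :=
            mul_le_mul_of_nonneg_left hexp hσ2.le
        _ = σ2 + c * t := by rw [hfrac]; field_simp
    have hexpo : -s * t + K * s ^ 2 / 2 ≤ -(t ^ 2) / (2 * (σ2 + c * t)) := by
      have h3 : K * s ^ 2 / 2 ≤ s * t / 2 := by
        nlinarith [sq_nonneg s]
      have h4 : -(t ^ 2) / (2 * (σ2 + c * t)) = -(s * t) / 2 := by
        rw [hs]; field_simp
      rw [h4]; linarith
    calc (μ {ω | t ≤ Y ω}).toReal ≤ exp (-s * t) * mgf Y μ s := hch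
      _ = exp (-s * t) * m s := by rw [hmgfeq]
      _ ≤ exp (-s * t) * exp (K * s ^ 2 / 2) :=
          mul_le_mul_of_nonneg_left hms (exp_pos _).le
      _ = exp (-s * t + K * s ^ 2 / 2) := by rw [← exp_add]
      _ ≤ exp (-(t ^ 2) / (2 * (σ2 + c * t))) := exp_le_exp.mpr hexpo
end

section
/- Let Y be a mean zero random variable with variance σ² ∈ (0,∞), and let Y* be defined on the same probability space and have the Y-zero biased distribution. Suppose Y − Y* ≤ c almost surely for some constant c > 0, and that the moment generating function m(s) = E[exp(sY)] is finite for all s ∈ (−1/c, 0]. Then for all t ≥ 0, P(Y ≤ −t) ≤ exp(−t² / (2(σ² + ct))). -/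
open MeasureTheory ProbabilityTheory Real

lemma zb_exp_between {v₁ v v₂ : ℝ} (y : ℝ) (h1 : v₁ ≤ v) (h2 : v ≤ v₂) :
    exp (v * y) ≤ exp (v₁ * y) + exp (v₂ * y) := by
  rcases le_or_gt 0 y with hy | hy
  · have := exp_le_exp.2 (mul_le_mul_of_nonneg_right h2 hy)
    linarith [exp_pos (v₁ * y)]
  · have := exp_le_exp.2 (mul_le_mul_of_nonpos_right h1 hy.le)
    linarith [exp_pos (v₂ * y)]

lemma zb_abs_mul_exp_le {ε : ℝ} (v y : ℝ) (hε : 0 < ε) :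
    |y| * exp (v * y) ≤ ε⁻¹ * (exp ((v - ε) * y) + exp ((v + ε) * y)) := by
  have h1 : ε * |y| ≤ exp (ε * y) + exp (-(ε * y)) := by
    rcases abs_cases y with ⟨h, _⟩ | ⟨h, _⟩
    · rw [h]; linarith [add_one_le_exp (ε * y), exp_pos (-(ε * y))]
    · rw [h]; linarith [add_one_le_exp (-(ε * y)), exp_pos (ε * y)]
  have h3 : |y| * exp (v * y) = ε⁻¹ * ((ε * |y|) * exp (v * y)) := by
    field_simp
  rw [h3]
  have h4 : (ε * |y|) * exp (v * y) ≤ (exp (ε * y) + exp (-(ε * y))) * exp (v * y) :=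
    mul_le_mul_of_nonneg_right h1 (exp_pos _).le
  calc ε⁻¹ * ((ε * |y|) * exp (v * y))
      ≤ ε⁻¹ * ((exp (ε * y) + exp (-(ε * y))) * exp (v * y)) :=
        mul_le_mul_of_nonneg_left h4 (by positivity)
    _ = ε⁻¹ * (exp ((v - ε) * y) + exp ((v + ε) * y)) := by
        rw [add_mul, ← exp_add, ← exp_add]; ring_nf

theorem zero_bias_left_tail
    {Ω : Type*} [MeasurableSpace Ω] (μ : Measure Ω) [IsProbabilityMeasure μ]
    (Y Ystar : Ω → ℝ) (hY : Measurable Y) (hYstar : Measurable Ystar)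
    (σ2 : ℝ) (hσ2 : 0 < σ2)
    (hmean : ∫ ω, Y ω ∂μ = 0) (hL2 : MemLp Y 2 μ) (hvar : variance Y μ = σ2)
    (hzb : ZeroBiased μ Y Ystar σ2)
    (c : ℝ) (hc : 0 < c)
    (hbdd : ∀ᵐ ω ∂μ, Y ω - Ystar ω ≤ c)
    (hmgf : ∀ s ∈ Set.Ioc (-(1 / c)) (0 : ℝ), Integrable (fun ω => exp (s * Y ω)) μ) :
    ∀ t : ℝ, 0 ≤ t →
      (μ {ω | Y ω ≤ -t}).toReal ≤ exp (-(t ^ 2) / (2 * (σ2 + c * t))) := by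
  have hcc : (0:ℝ) < 1/c := by positivity
  have hmeasE : ∀ v : ℝ, AEStronglyMeasurable (fun ω => exp (v * Y ω)) μ := fun v =>
    (measurable_exp.comp (measurable_const.mul hY)).aestronglyMeasurable
  -- Step 1: integrability of Y * exp (u * Y) for u in the open interval
  have hintY : ∀ u ∈ Set.Ioo (-(1/c)) (0:ℝ),
      Integrable (fun ω => Y ω * exp (u * Y ω)) μ := by
    intro u hu
    obtain ⟨hu1, hu2⟩ := hu
    set ε : ℝ := min ((u + 1/c)/2) (-u/2) with hεdef
    have hε : 0 < ε := lt_min (by linarith) (by linarith)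
    have hεa : ε ≤ (u + 1/c)/2 := min_le_left _ _
    have hεb : ε ≤ -u/2 := min_le_right _ _
    have hm1 : u - ε ∈ Set.Ioc (-(1/c)) (0:ℝ) := ⟨by linarith, by linarith⟩
    have hm2 : u + ε ∈ Set.Ioc (-(1/c)) (0:ℝ) := ⟨by linarith, by linarith⟩
    refine Integrable.mono' (((hmgf _ hm1).add (hmgf _ hm2)).const_mul ε⁻¹)
      ((hY.mul (measurable_exp.comp (measurable_const.mul hY))).aestronglyMeasurable) ?_
    filter_upwards with ω
    rw [norm_mul, Real.norm_eq_abs, Real.norm_eq_abs, abs_exp]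
    exact zb_abs_mul_exp_le u (Y ω) hε
  -- Step 2: derivative of the mgf on the open interval
  have hmgf_deriv : ∀ u ∈ Set.Ioo (-(1/c)) (0:ℝ),
      HasDerivAt (fun v => mgf Y μ v) (∫ ω, Y ω * exp (u * Y ω) ∂μ) u := by
    intro u hu
    obtain ⟨hu1, hu2⟩ := hu
    set ε : ℝ := min ((u + 1/c)/4) (-u/4) with hεdef
    have hε : 0 < ε := lt_min (by linarith) (by linarith)
    have hεa : ε ≤ (u + 1/c)/4 := min_le_left _ _
    have hεb : ε ≤ -u/4 := min_le_right _ _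
    have hm1 : u - 2*ε ∈ Set.Ioc (-(1/c)) (0:ℝ) := ⟨by linarith, by linarith⟩
    have hm2 : u + 2*ε ∈ Set.Ioc (-(1/c)) (0:ℝ) := ⟨by linarith, by linarith⟩
    have hm0 : u ∈ Set.Ioc (-(1/c)) (0:ℝ) := ⟨hu1, hu2.le⟩
    have key := hasDerivAt_integral_of_dominated_loc_of_deriv_le (μ := μ)
      (F := fun v ω => exp (v * Y ω)) (F' := fun v ω => Y ω * exp (v * Y ω))
      (x₀ := u)
      (bound := fun ω => ε⁻¹ * ((exp ((u - 2*ε) * Y ω) + exp (u * Y ω)) +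
        (exp (u * Y ω) + exp ((u + 2*ε) * Y ω)))) (Metric.ball_mem_nhds u hε)
      (Filter.Eventually.of_forall fun v => hmeasE v) (hmgf u hm0)
      ((hY.mul (measurable_exp.comp (measurable_const.mul hY))).aestronglyMeasurable)
      ?_ ?_ ?_
    · exact key.2
    · -- bound
      filter_upwards with ω
      intro x hx
      rw [Metric.mem_ball, Real.dist_eq, abs_lt] at hx
      rw [norm_mul, Real.norm_eq_abs, Real.norm_eq_abs, abs_exp]
      refine le_trans (zb_abs_mul_exp_le x (Y ω) hε) ?_
      refine mul_le_mul_of_nonneg_left (add_le_add ?_ ?_) (by positivity)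
      · exact zb_exp_between (Y ω) (by linarith) (by linarith)
      · exact zb_exp_between (Y ω) (by linarith) (by linarith)
    · exact (((hmgf _ hm1).add (hmgf u hm0)).add
        ((hmgf u hm0).add (hmgf _ hm2))).const_mul ε⁻¹
    · filter_upwards with ω
      intro x _
      have h := ((hasDerivAt_id x).mul_const (Y ω)).exp
      simp only [id_eq, one_mul] at h
      rw [mul_comm]
      exact h
  -- Step 3: the zero-bias identity with exponential test functions
  have hstar_int : ∀ u ∈ Set.Ioo (-(1/c)) (0:ℝ),
      Integrable (fun ω => exp (u * Ystar ω)) μ := by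
    intro u hu
    refine Integrable.mono' ((hmgf u ⟨hu.1, hu.2.le⟩).const_mul (exp (-(u * c))))
      ((measurable_exp.comp (measurable_const.mul hYstar)).aestronglyMeasurable) ?_
    filter_upwards [hbdd] with ω hω
    rw [Real.norm_eq_abs, abs_exp, ← exp_add]
    apply exp_le_exp.2
    nlinarith [hu.2]
  have hstar_le : ∀ u ∈ Set.Ioo (-(1/c)) (0:ℝ),
      ∫ ω, exp (u * Ystar ω) ∂μ ≤ exp (-(u * c)) * mgf Y μ u := by
    intro u hu
    have h1 : ∫ ω, exp (u * Ystar ω) ∂μ ≤ ∫ ω, exp (-(u * c)) * exp (u * Y ω) ∂μ := by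
      refine integral_mono_ae (hstar_int u hu)
        ((hmgf u ⟨hu.1, hu.2.le⟩).const_mul (exp (-(u * c)))) ?_
      filter_upwards [hbdd] with ω hω
      rw [← exp_add]
      apply exp_le_exp.2
      nlinarith [hu.2]
    rw [integral_const_mul] at h1
    exact h1
  have hid : ∀ u ∈ Set.Ioo (-(1/c)) (0:ℝ),
      ∫ ω, Y ω * exp (u * Y ω) ∂μ = σ2 * (u * ∫ ω, exp (u * Ystar ω) ∂μ) := by
    intro u hu
    have hd : ∀ x : ℝ, HasDerivAt (fun y => exp (u * y)) (u * exp (u * x)) x := by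
      intro x
      have h := ((hasDerivAt_id x).const_mul u).exp
      simp only [id_eq, mul_one] at h
      rw [mul_comm] at h
      exact h
    have h := hzb (fun y => exp (u * y)) (fun y => u * exp (u * y)) hd
      (hintY u hu) ((hstar_int u hu).const_mul u)
    rw [h, integral_const_mul]
  -- mgf positivity
  have hmgf_pos : ∀ u ∈ Set.Ioc (-(1/c)) (0:ℝ), 0 < mgf Y μ u := fun u hu =>
    mgf_pos (hmgf u hu)
  -- the main tail bound
  intro t ht
  rcases ht.eq_or_lt with rfl | htpos
  · simp only [neg_zero, zero_pow, ne_eq, OfNat.ofNat_ne_zero, not_false_eq_true,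
      mul_zero, add_zero, zero_div, exp_zero]
    simpa using ENNReal.toReal_mono ENNReal.one_ne_top prob_le_one
  -- t > 0 now
  set D : ℝ := σ2 + c * t with hDdef
  have hD : 0 < D := by positivity
  set s : ℝ := -t / D with hsdef
  have hs_neg : s < 0 := div_neg_of_neg_of_pos (by linarith) hD
  have hs_gt : -(1/c) < s := by
    rw [hsdef, neg_div, neg_lt_neg_iff, div_lt_div_iff₀ hD hc]
    nlinarith
  have hsIoo : s ∈ Set.Ioo (-(1/c)) (0:ℝ) := ⟨hs_gt, hs_neg⟩
  have hsIoc : s ∈ Set.Ioc (-(1/c)) (0:ℝ) := ⟨hs_gt, hs_neg.le⟩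
  have h1sc : 0 < 1 + s * c := by
    have : -(1/c) * c < s * c := mul_lt_mul_of_pos_right hs_gt hc
    rw [neg_mul, one_div, inv_mul_cancel₀ hc.ne'] at this
    linarith
  set a : ℝ := σ2 / (1 + s * c) with hadef
  have ha_pos : 0 < a := div_pos hσ2 h1sc
  -- the function G
  set G : ℝ → ℝ := fun u => mgf Y μ u * exp (-(a * u ^ 2) / 2) with hGdef
  -- derivative of G on Ioo s 0
  have hGderiv : ∀ u ∈ Set.Ioo s 0,
      HasDerivAt G ((∫ ω, Y ω * exp (u * Y ω) ∂μ) * exp (-(a * u ^ 2) / 2) +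
        mgf Y μ u * (exp (-(a * u ^ 2) / 2) * (-(a * (2 * u)) / 2))) u := by
    intro u hu
    have huIoo : u ∈ Set.Ioo (-(1/c)) (0:ℝ) := ⟨lt_trans hs_gt hu.1, hu.2⟩
    have h1 : HasDerivAt (fun u : ℝ => -(a * u ^ 2) / 2) (-(a * (2 * u)) / 2) u := by
      have := (((hasDerivAt_pow 2 u).const_mul a).neg).div_const 2
      simpa using this
    exact (hmgf_deriv u huIoo).mul h1.exp
  have hGderiv_nonneg : ∀ u ∈ Set.Ioo s 0,
      0 ≤ (∫ ω, Y ω * exp (u * Y ω) ∂μ) * exp (-(a * u ^ 2) / 2) +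
        mgf Y μ u * (exp (-(a * u ^ 2) / 2) * (-(a * (2 * u)) / 2)) := by
    intro u hu
    have huIoo : u ∈ Set.Ioo (-(1/c)) (0:ℝ) := ⟨lt_trans hs_gt hu.1, hu.2⟩
    have hM : 0 < mgf Y μ u := hmgf_pos u ⟨huIoo.1, huIoo.2.le⟩
    have h1uc : 0 < 1 + u * c := by nlinarith [hu.1, h1sc]
    -- m'(u) ≥ a u m(u)
    have hkey : a * u * mgf Y μ u ≤ ∫ ω, Y ω * exp (u * Y ω) ∂μ := by
      rw [hid u huIoo]
      have hIle : ∫ ω, exp (u * Ystar ω) ∂μ ≤ exp (-(u * c)) * mgf Y μ u := hstar_le u huIoo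
      have hB : exp (-(u * c)) ≤ (1 + u * c)⁻¹ := by
        rw [exp_neg]
        apply inv_anti₀ h1uc
        linarith [add_one_le_exp (u * c)]
      have hle : (1 + u * c)⁻¹ ≤ (1 + s * c)⁻¹ := by
        apply inv_anti₀ h1sc
        nlinarith [hu.1]
      have hun : u ≤ 0 := huIoo.2.le
      have h2 : u * (exp (-(u * c)) * mgf Y μ u) ≤ u * ∫ ω, exp (u * Ystar ω) ∂μ :=
        mul_le_mul_of_nonpos_left hIle hun
      have h3 : u * ((1 + u * c)⁻¹ * mgf Y μ u) ≤ u * (exp (-(u * c)) * mgf Y μ u) :=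
        mul_le_mul_of_nonpos_left (mul_le_mul_of_nonneg_right hB hM.le) hun
      have h4 : u * ((1 + s * c)⁻¹ * mgf Y μ u) ≤ u * ((1 + u * c)⁻¹ * mgf Y μ u) :=
        mul_le_mul_of_nonpos_left (mul_le_mul_of_nonneg_right hle hM.le) hun
      have h5 : a * u * mgf Y μ u = σ2 * (u * ((1 + s * c)⁻¹ * mgf Y μ u)) := by
        rw [hadef, div_eq_mul_inv]; ring
      rw [h5]
      have h6 : u * ((1 + s * c)⁻¹ * mgf Y μ u) ≤ u * ∫ ω, exp (u * Ystar ω) ∂μ := by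
        linarith
      exact mul_le_mul_of_nonneg_left h6 hσ2.le
    have hE : 0 < exp (-(a * u ^ 2) / 2) := exp_pos _
    have : (∫ ω, Y ω * exp (u * Y ω) ∂μ) * exp (-(a * u ^ 2) / 2) +
        mgf Y μ u * (exp (-(a * u ^ 2) / 2) * (-(a * (2 * u)) / 2)) =
        ((∫ ω, Y ω * exp (u * Y ω) ∂μ) - a * u * mgf Y μ u) * exp (-(a * u ^ 2) / 2) := by
      ring
    rw [this]
    exact mul_nonneg (by linarith) hE.le
  -- continuity of G on Icc s 0
  have hmgf_cont : ContinuousOn (fun u => mgf Y μ u) (Set.Icc s 0) := by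
    intro u hu
    rcases lt_or_eq_of_le hu.2 with hu2 | hu2
    · exact ((hmgf_deriv u ⟨lt_of_lt_of_le hs_gt hu.1, hu2⟩).continuousAt).continuousWithinAt
    · subst hu2
      have : ContinuousWithinAt (fun x => ∫ ω, exp (x * Y ω) ∂μ) (Set.Icc s 0) 0 := by
        apply continuousWithinAt_of_dominated (bound := fun ω => exp (s * Y ω) + 1)
        · exact Filter.Eventually.of_forall fun x => hmeasE x
        · apply eventually_nhdsWithin_of_forall
          intro x hx
          filter_upwards with ω
          rw [Real.norm_eq_abs, abs_exp]
          have := zb_exp_between (v₁ := s) (v := x) (v₂ := 0) (Y ω) hx.1 hx.2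
          simpa using this
        · exact (hmgf s hsIoc).add (integrable_const 1)
        · filter_upwards with ω
          exact (Real.continuous_exp.comp (continuous_id.mul continuous_const)).continuousWithinAt
      exact this
  have hGcont : ContinuousOn G (Set.Icc s 0) :=
    hmgf_cont.mul ((Real.continuous_exp.comp (by fun_prop)).continuousOn)
  -- monotonicity
  have hmono : MonotoneOn G (Set.Icc s 0) := by
    apply monotoneOn_of_deriv_nonneg (convex_Icc s 0) hGcont
    · intro u hu
      rw [interior_Icc] at hu
      exact (hGderiv u hu).differentiableAt.differentiableWithinAt
    · intro u hu
      rw [interior_Icc] at hu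
      rw [(hGderiv u hu).deriv]
      exact hGderiv_nonneg u hu
  have hG_le : G s ≤ G 0 :=
    hmono (Set.left_mem_Icc.2 hs_neg.le) (Set.right_mem_Icc.2 hs_neg.le) hs_neg.le
  have hG0 : G 0 = 1 := by
    simp [hGdef, mgf_zero]
  -- mgf bound
  have hmgf_bound : mgf Y μ s ≤ exp (a * s ^ 2 / 2) := by
    rw [hG0] at hG_le
    have hE : 0 < exp (-(a * s ^ 2) / 2) := exp_pos _
    have h1 : exp (a * s ^ 2 / 2) * exp (-(a * s ^ 2) / 2) = 1 := by
      rw [← exp_add]; ring_nf; exact exp_zero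
    have hGs : G s = mgf Y μ s * exp (-(a * s ^ 2) / 2) := rfl
    rw [hGs, ← h1] at hG_le
    exact le_of_mul_le_mul_right hG_le hE
  -- Chernoff
  have hch := measure_le_le_exp_mul_mgf (μ := μ) (X := Y) (t := s) (-t) hs_neg.le
    (hmgf s hsIoc)
  have hfinal : exp (-s * -t) * mgf Y μ s ≤ exp (-(t ^ 2) / (2 * (σ2 + c * t))) := by
    have h2 : exp (-s * -t) * mgf Y μ s ≤ exp (-s * -t) * exp (a * s ^ 2 / 2) :=
      mul_le_mul_of_nonneg_left hmgf_bound (exp_pos _).le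
    rw [← exp_add] at h2
    refine h2.trans (le_of_eq ?_)
    congr 1
    have hDne : σ2 + c * t ≠ 0 := by positivity
    have hsc : 1 + s * c = σ2 / D := by
      rw [hsdef, hDdef]
      field_simp
      ring
    have haD : a = D := by
      rw [hadef, hsc, div_div_eq_mul_div, mul_comm, mul_div_assoc, div_self hσ2.ne', mul_one]
    rw [haD, hsdef, hDdef]
    field_simp
    ring
  exact hch.trans hfinal
end

section
/- Let Y be a mean zero random variable with variance σ² ∈ (0,∞), and let Y* be defined on the same probability space and have the Y-zero biased distribution. Suppose |Y* − Y| ≤ c almost surely for some constant c > 0, and that the moment generating function m(s) = E[exp(sY)] is finite for all s ∈ [0, 2/c). Then for all t ≥ 0, P(Y ≥ t) ≤ exp(−t² / (10σ²/3 + ct)). -/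
open MeasureTheory ProbabilityTheory Real

set_option maxHeartbeats 2000000 in
theorem zero_bias_right_tail_abs
    {Ω : Type*} [MeasurableSpace Ω] (μ : Measure Ω) [IsProbabilityMeasure μ]
    (Y Ystar : Ω → ℝ) (hY : Measurable Y) (hYstar : Measurable Ystar)
    (σ2 : ℝ) (hσ2 : 0 < σ2)
    (hmean : ∫ ω, Y ω ∂μ = 0) (hL2 : MemLp Y 2 μ) (hvar : variance Y μ = σ2)
    (hzb : ZeroBiased μ Y Ystar σ2)
    (c : ℝ) (hc : 0 < c)
    (hbdd : ∀ᵐ ω ∂μ, |Ystar ω - Y ω| ≤ c)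
    (hmgf : ∀ s ∈ Set.Ico (0 : ℝ) (2 / c), Integrable (fun ω => exp (s * Y ω)) μ) :
    ∀ t : ℝ, 0 ≤ t →
      (μ {ω | t ≤ Y ω}).toReal ≤ exp (-(t ^ 2) / (10 * σ2 / 3 + c * t)) := by
  intro t ht
  have hle_one : ∀ A : Set Ω, (μ A).toReal ≤ 1 := by
    intro A
    have h1 : μ A ≤ 1 := prob_le_one
    simpa using ENNReal.toReal_mono ENNReal.one_ne_top h1
  rcases ht.eq_or_lt with rfl | htpos
  · have h0 : -((0:ℝ) ^ 2) / (10 * σ2 / 3 + c * 0) = 0 := by norm_num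
    rw [h0, Real.exp_zero]
    exact hle_one _
  -- main case : t > 0
  have hct : 0 < c * t := mul_pos hc htpos
  set D : ℝ := 10 * σ2 / 3 + c * t with hDdef
  have hD : 0 < D := by rw [hDdef]; nlinarith
  set s₀ : ℝ := 2 * t / D with hs₀def
  have hs₀ : 0 < s₀ := div_pos (by linarith) hD
  have hs₀D : s₀ * D = 2 * t := by rw [hs₀def]; field_simp
  have hs₀c : s₀ * c < 2 := by
    rw [hs₀def, div_mul_eq_mul_div, div_lt_iff₀ hD]
    rw [hDdef]; nlinarith
  have hs₀lt : s₀ < 2 / c := by rw [lt_div_iff₀ hc]; exact hs₀c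
  have hIntY : Integrable Y μ := hL2.integrable one_le_two
  have hInt : ∀ s : ℝ, 0 ≤ s → s < 2 / c → Integrable (fun ω => exp (s * Y ω)) μ :=
    fun s h1 h2 => hmgf s ⟨h1, h2⟩
  have hMpos : ∀ s : ℝ, 0 ≤ s → s < 2 / c → 0 < ∫ ω, exp (s * Y ω) ∂μ := by
    intro s h1 h2
    exact mgf_pos (hInt s h1 h2)
  -- derivative of the mgf on (0, 2/c)
  have hderiv : ∀ s : ℝ, 0 < s → s < 2 / c →
      Integrable (fun ω => Y ω * exp (s * Y ω)) μ ∧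
      HasDerivAt (fun u => ∫ ω, exp (u * Y ω) ∂μ) (∫ ω, Y ω * exp (s * Y ω) ∂μ) s := by
    intro s hs1 hs2
    set δ : ℝ := (2 / c - s) / 2 with hδdef
    have hδ : 0 < δ := by rw [hδdef]; linarith
    set s' : ℝ := s + δ with hs'def
    have hs'lt : s' < 2 / c := by rw [hs'def, hδdef]; linarith
    have hs'0 : 0 ≤ s' := by rw [hs'def]; linarith
    set ε : ℝ := min s (δ / 2) with hεdef
    have hε : 0 < ε := lt_min hs1 (by linarith)
    have hball : ∀ x ∈ Metric.ball s ε, 0 ≤ x ∧ x ≤ s' - δ / 2 := by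
      intro x hx
      rw [Metric.mem_ball, Real.dist_eq] at hx
      have h1 : s - x ≤ |x - s| := by rw [abs_sub_comm]; exact le_abs_self _
      have h2 : x - s ≤ |x - s| := le_abs_self _
      have h3 : ε ≤ s := min_le_left _ _
      have h4 : ε ≤ δ / 2 := min_le_right _ _
      refine ⟨by linarith, by rw [hs'def]; linarith⟩
    refine hasDerivAt_integral_of_dominated_loc_of_deriv_le
      (F' := fun x ω => Y ω * exp (x * Y ω))
      (bound := fun ω => |Y ω| + (2 / δ) * exp (s' * Y ω)) (Metric.ball_mem_nhds s hε) ?_ ?_ ?_ ?_ ?_ ?_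
    · exact Filter.Eventually.of_forall fun x =>
        (measurable_exp.comp (hY.const_mul x)).aestronglyMeasurable
    · exact hInt s hs1.le hs2
    · exact (hY.mul (measurable_exp.comp (hY.const_mul s))).aestronglyMeasurable
    · refine Filter.Eventually.of_forall fun ω x hx => ?_
      obtain ⟨hx0, hxle⟩ := hball x hx
      rw [Real.norm_eq_abs, abs_mul, abs_exp]
      rcases le_or_gt (Y ω) 0 with hy | hy
      · have h1 : exp (x * Y ω) ≤ 1 := by
          rw [← Real.exp_zero]
          exact exp_le_exp.mpr (mul_nonpos_of_nonneg_of_nonpos hx0 hy)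
        have h2 : (0:ℝ) ≤ (2 / δ) * exp (s' * Y ω) := by positivity
        nlinarith [abs_nonneg (Y ω), (exp_pos (x * Y ω)).le]
      · have hy' : 0 ≤ Y ω := hy.le
        have h1 : exp (x * Y ω) ≤ exp ((s' - δ / 2) * Y ω) :=
          exp_le_exp.mpr (mul_le_mul_of_nonneg_right hxle hy')
        have h2 : Y ω ≤ 2 / δ * exp (δ / 2 * Y ω) := by
          have ha : δ / 2 * Y ω + 1 ≤ exp (δ / 2 * Y ω) := Real.add_one_le_exp _
          have hb : δ / 2 * Y ω ≤ exp (δ / 2 * Y ω) := by linarith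
          have hid : Y ω = 2 / δ * (δ / 2 * Y ω) := by field_simp
          calc Y ω = 2 / δ * (δ / 2 * Y ω) := hid
            _ ≤ 2 / δ * exp (δ / 2 * Y ω) := by
                exact mul_le_mul_of_nonneg_left hb (by positivity)
        calc |Y ω| * exp (x * Y ω) = Y ω * exp (x * Y ω) := by rw [abs_of_nonneg hy']
          _ ≤ Y ω * exp ((s' - δ / 2) * Y ω) := mul_le_mul_of_nonneg_left h1 hy'
          _ ≤ (2 / δ * exp (δ / 2 * Y ω)) * exp ((s' - δ / 2) * Y ω) :=
              mul_le_mul_of_nonneg_right h2 (exp_pos _).le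
          _ = 2 / δ * exp (s' * Y ω) := by
              rw [mul_assoc, ← Real.exp_add]; congr 2; ring
          _ ≤ |Y ω| + 2 / δ * exp (s' * Y ω) := le_add_of_nonneg_left (abs_nonneg _)
    · exact hIntY.abs.add ((hInt s' hs'0 hs'lt).const_mul _)
    · refine Filter.Eventually.of_forall fun ω x _ => ?_
      have h1 : HasDerivAt (fun u : ℝ => u * Y ω) (Y ω) x := hasDerivAt_mul_const (Y ω)
      simpa [mul_comm] using h1.exp
  -- integrability and bound for exp (s * Ystar)
  have hstar : ∀ s : ℝ, 0 ≤ s → s < 2 / c →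
      Integrable (fun ω => exp (s * Ystar ω)) μ ∧
      ∫ ω, exp (s * Ystar ω) ∂μ ≤ exp (s * c) * ∫ ω, exp (s * Y ω) ∂μ := by
    intro s h1 h2
    have hb : ∀ᵐ ω ∂μ, exp (s * Ystar ω) ≤ exp (s * c) * exp (s * Y ω) := by
      filter_upwards [hbdd] with ω hω
      have h3 : Ystar ω ≤ Y ω + c := by
        have := (abs_le.mp hω).2; linarith
      rw [← Real.exp_add]
      refine exp_le_exp.mpr ?_
      nlinarith [mul_le_mul_of_nonneg_left h3 h1]
    have hmeas : AEStronglyMeasurable (fun ω => exp (s * Ystar ω)) μ :=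
      (measurable_exp.comp (hYstar.const_mul s)).aestronglyMeasurable
    have hint2 : Integrable (fun ω => exp (s * c) * exp (s * Y ω)) μ :=
      (hInt s h1 h2).const_mul _
    have hint : Integrable (fun ω => exp (s * Ystar ω)) μ := by
      refine hint2.mono' hmeas ?_
      filter_upwards [hb] with ω hω
      rw [Real.norm_eq_abs, abs_exp]; exact hω
    refine ⟨hint, ?_⟩
    have := integral_mono_ae hint hint2 hb
    rwa [integral_const_mul] at this
  -- the comparison function and its derivative
  have hGderiv : ∀ s ∈ Set.Ioo (0:ℝ) s₀,
      HasDerivAt (fun u => σ2 * exp (s₀ * c) * u ^ 2 / 2 - Real.log (∫ ω, exp (u * Y ω) ∂μ))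
        (σ2 * exp (s₀ * c) * s -
          (∫ ω, Y ω * exp (s * Y ω) ∂μ) / ∫ ω, exp (s * Y ω) ∂μ) s ∧
      0 ≤ σ2 * exp (s₀ * c) * s -
          (∫ ω, Y ω * exp (s * Y ω) ∂μ) / ∫ ω, exp (s * Y ω) ∂μ := by
    intro s hs
    obtain ⟨hs1, hs2⟩ := hs
    have hs2c : s < 2 / c := hs2.trans hs₀lt
    obtain ⟨hint1, hder⟩ := hderiv s hs1 hs2c
    obtain ⟨hintstar, hlestar⟩ := hstar s hs1.le hs2c
    have hMp := hMpos s hs1.le hs2c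
    have hpoly : HasDerivAt (fun u : ℝ => σ2 * exp (s₀ * c) * u ^ 2 / 2)
        (σ2 * exp (s₀ * c) * s) s := by
      have h0 : HasDerivAt (fun u : ℝ => u ^ 2) (2 * s) s := by
        simpa using hasDerivAt_pow 2 s
      have := (h0.const_mul (σ2 * exp (s₀ * c))).div_const 2
      rw [show σ2 * exp (s₀ * c) * s = σ2 * exp (s₀ * c) * (2 * s) / 2 by ring]; exact this
    have hlog : HasDerivAt (fun u => Real.log (∫ ω, exp (u * Y ω) ∂μ))
        ((∫ ω, Y ω * exp (s * Y ω) ∂μ) / ∫ ω, exp (s * Y ω) ∂μ) s :=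
      hder.log hMp.ne'
    refine ⟨hpoly.sub hlog, ?_⟩
    have heq : ∫ ω, Y ω * exp (s * Y ω) ∂μ = σ2 * ∫ ω, s * exp (s * Ystar ω) ∂μ := by
      refine hzb (fun x => exp (s * x)) (fun x => s * exp (s * x)) ?_ hint1
        (hintstar.const_mul s)
      intro x
      have h1 : HasDerivAt (fun y : ℝ => s * y) s x := by
        simpa using (hasDerivAt_id x).const_mul s
      simpa [mul_comm] using h1.exp
    have hexpc : exp (s * c) ≤ exp (s₀ * c) :=
      exp_le_exp.mpr (mul_le_mul_of_nonneg_right hs2.le hc.le)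
    have hnum : ∫ ω, Y ω * exp (s * Y ω) ∂μ ≤
        σ2 * exp (s₀ * c) * s * ∫ ω, exp (s * Y ω) ∂μ := by
      rw [heq, integral_const_mul]
      have h1 : s * ∫ ω, exp (s * Ystar ω) ∂μ ≤
          s * (exp (s * c) * ∫ ω, exp (s * Y ω) ∂μ) :=
        mul_le_mul_of_nonneg_left hlestar hs1.le
      have h2 : σ2 * (s * ∫ ω, exp (s * Ystar ω) ∂μ) ≤
          σ2 * (s * (exp (s * c) * ∫ ω, exp (s * Y ω) ∂μ)) :=
        mul_le_mul_of_nonneg_left h1 hσ2.le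
      have h3 : (0:ℝ) ≤ σ2 * s * (∫ ω, exp (s * Y ω) ∂μ) :=
        mul_nonneg (mul_nonneg hσ2.le hs1.le) hMp.le
      nlinarith [mul_le_mul_of_nonneg_left (sub_nonneg.mpr hexpc) h3]
    rw [sub_nonneg, div_le_iff₀ hMp]
    exact hnum
  -- continuity of the comparison function on [0, s₀]
  have hMcont : ContinuousOn (fun u => ∫ ω, exp (u * Y ω) ∂μ) (Set.Icc 0 s₀) := by
    refine continuousOn_of_dominated (bound := fun ω => 1 + exp (s₀ * Y ω)) ?_ ?_ ?_ ?_
    · intro x _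
      exact (measurable_exp.comp (hY.const_mul x)).aestronglyMeasurable
    · intro x hx
      refine Filter.Eventually.of_forall fun ω => ?_
      simp only [Real.norm_eq_abs, abs_exp]
      rcases le_or_gt (Y ω) 0 with hy | hy
      · have h1 : exp (x * Y ω) ≤ 1 := by
          rw [← Real.exp_zero]
          exact exp_le_exp.mpr (mul_nonpos_of_nonneg_of_nonpos hx.1 hy)
        linarith [(exp_pos (s₀ * Y ω)).le]
      · have h1 : exp (x * Y ω) ≤ exp (s₀ * Y ω) :=
          exp_le_exp.mpr (mul_le_mul_of_nonneg_right hx.2 hy.le)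
        linarith
    · exact (integrable_const 1).add (hInt s₀ hs₀.le hs₀lt)
    · refine Filter.Eventually.of_forall fun ω => ?_
      exact (Real.continuous_exp.comp (continuous_id.mul continuous_const)).continuousOn
  have hGcont : ContinuousOn
      (fun u => σ2 * exp (s₀ * c) * u ^ 2 / 2 - Real.log (∫ ω, exp (u * Y ω) ∂μ))
      (Set.Icc 0 s₀) := by
    refine ContinuousOn.sub ?_ ?_
    · exact Continuous.continuousOn ((continuous_const.mul (continuous_pow 2)).div_const 2)
    · exact hMcont.log fun x hx => (hMpos x hx.1 (lt_of_le_of_lt hx.2 hs₀lt)).ne'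
  -- monotonicity
  have hmono : MonotoneOn
      (fun u => σ2 * exp (s₀ * c) * u ^ 2 / 2 - Real.log (∫ ω, exp (u * Y ω) ∂μ))
      (Set.Icc 0 s₀) := by
    refine monotoneOn_of_deriv_nonneg (convex_Icc 0 s₀) hGcont ?_ ?_
    · rw [interior_Icc]
      intro x hx
      exact ((hGderiv x hx).1).differentiableAt.differentiableWithinAt
    · rw [interior_Icc]
      intro x hx
      rw [(hGderiv x hx).1.deriv]
      exact (hGderiv x hx).2
  -- evaluate at the endpoints
  have hkey : Real.log (∫ ω, exp (s₀ * Y ω) ∂μ) ≤ σ2 * exp (s₀ * c) * s₀ ^ 2 / 2 := by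
    have h01 : (0:ℝ) ∈ Set.Icc (0:ℝ) s₀ := ⟨le_refl 0, hs₀.le⟩
    have h02 : s₀ ∈ Set.Icc (0:ℝ) s₀ := ⟨hs₀.le, le_refl s₀⟩
    have hm := hmono h01 h02 hs₀.le
    simp only at hm
    have h1 : (∫ ω, exp ((0:ℝ) * Y ω) ∂μ) = 1 := by simp
    rw [h1, Real.log_one] at hm
    have h2 : σ2 * exp (s₀ * c) * 0 ^ 2 / 2 - 0 = 0 := by ring
    rw [h2] at hm
    linarith
  have hMs₀ : ∫ ω, exp (s₀ * Y ω) ∂μ ≤ exp (σ2 * exp (s₀ * c) * s₀ ^ 2 / 2) :=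
    (Real.log_le_iff_le_exp (hMpos s₀ hs₀.le hs₀lt)).mp hkey
  -- the numerical inequality : 2 σ2 e^{s₀ c} ≤ D
  have hkey2 : 2 * σ2 * exp (s₀ * c) ≤ D := by
    have h2ε : 0 < 2 - s₀ * c := by linarith
    have hDε : D * (2 - s₀ * c) = 20 * σ2 / 3 := by
      have hsc : D * (s₀ * c) = 2 * (c * t) := by
        have : D * (s₀ * c) = (s₀ * D) * c := by ring
        rw [this, hs₀D]; ring
      have h2 : D * (2 - s₀ * c) = 2 * D - D * (s₀ * c) := by ring
      rw [h2, hsc, hDdef]; ring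
    have ha : 2 - s₀ * c ≤ exp (1 - s₀ * c) := by
      have := Real.add_one_le_exp (1 - s₀ * c); linarith
    have hb : (2 - s₀ * c) * exp (s₀ * c) ≤ exp 1 := by
      calc (2 - s₀ * c) * exp (s₀ * c) ≤ exp (1 - s₀ * c) * exp (s₀ * c) :=
            mul_le_mul_of_nonneg_right ha (exp_pos _).le
        _ = exp 1 := by rw [← Real.exp_add]; congr 1; ring
    have hc1 : exp 1 ≤ 10 / 3 := by
      have := Real.exp_one_lt_d9; nlinarith
    have hd : 2 * σ2 * ((2 - s₀ * c) * exp (s₀ * c)) ≤ 2 * σ2 * (10 / 3) :=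
      mul_le_mul_of_nonneg_left (hb.trans hc1) (by linarith)
    have he : 2 * σ2 * exp (s₀ * c) * (2 - s₀ * c) ≤ D * (2 - s₀ * c) := by
      rw [hDε]; nlinarith
    exact le_of_mul_le_mul_right he h2ε
  -- Chernoff bound and conclusion
  have hchern := measure_ge_le_exp_mul_mgf (X := Y) (μ := μ) t hs₀.le (hInt s₀ hs₀.le hs₀lt)
  have hmgfeq : mgf Y μ s₀ = ∫ ω, exp (s₀ * Y ω) ∂μ := rfl
  have h5 : σ2 * exp (s₀ * c) * s₀ ≤ t := by
    nlinarith [mul_le_mul_of_nonneg_right hkey2 hs₀.le]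
  calc (μ {ω | t ≤ Y ω}).toReal ≤ exp (-s₀ * t) * mgf Y μ s₀ := hchern
    _ ≤ exp (-s₀ * t) * exp (σ2 * exp (s₀ * c) * s₀ ^ 2 / 2) := by
        rw [hmgfeq]
        exact mul_le_mul_of_nonneg_left hMs₀ (exp_pos _).le
    _ = exp (σ2 * exp (s₀ * c) * s₀ ^ 2 / 2 - s₀ * t) := by
        rw [← Real.exp_add]; congr 1; ring
    _ ≤ exp (-(t ^ 2) / D) := by
        refine exp_le_exp.mpr ?_
        rw [le_div_iff₀ hD]
        have e1 : σ2 * exp (s₀ * c) * s₀ ^ 2 / 2 * D = σ2 * exp (s₀ * c) * s₀ * t := by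
          have h : s₀ ^ 2 * D = s₀ * (2 * t) := by
            have : s₀ ^ 2 * D = s₀ * (s₀ * D) := by ring
            rw [this, hs₀D]
          calc σ2 * exp (s₀ * c) * s₀ ^ 2 / 2 * D
              = σ2 * exp (s₀ * c) * (s₀ ^ 2 * D) / 2 := by ring
            _ = σ2 * exp (s₀ * c) * (s₀ * (2 * t)) / 2 := by rw [h]
            _ = σ2 * exp (s₀ * c) * s₀ * t := by ring
        have e2 : s₀ * t * D = 2 * t ^ 2 := by
          have : s₀ * t * D = (s₀ * D) * t := by ring
          rw [this, hs₀D]; ring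
        have e3 : σ2 * exp (s₀ * c) * s₀ * t ≤ t * t :=
          mul_le_mul_of_nonneg_right h5 htpos.le
        have e4 : t * t = t ^ 2 := by ring
        have e5 : (σ2 * exp (s₀ * c) * s₀ ^ 2 / 2 - s₀ * t) * D
            = σ2 * exp (s₀ * c) * s₀ ^ 2 / 2 * D - s₀ * t * D := by ring
        rw [e5, e1, e2]
        linarith
end

section
/- Let Y be a mean zero random variable with variance σ² ∈ (0,∞), and let Y* be defined on the same probability space and have the Y-zero biased distribution. Suppose |Y* − Y| ≤ c almost surely for some constant c > 0, and that the moment generating function m(s) = E[exp(sY)] is finite for all s ∈ (−2/c, 0]. Then for all t ≥ 0, P(Y ≤ −t) ≤ exp(−t² / (10σ²/3 + ct)). -/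
open MeasureTheory ProbabilityTheory Real


lemma exp_mem_bound {p q a : ℝ} (y : ℝ) (hq : q ≤ a) (hp : a ≤ p) :
    exp (a * y) ≤ exp (p * y) + exp (q * y) := by
  rcases le_total 0 y with hy | hy
  · have h := exp_le_exp.2 (mul_le_mul_of_nonneg_right hp hy)
    linarith [exp_pos (q * y)]
  · have h := exp_le_exp.2 (mul_le_mul_of_nonpos_right hq hy)
    linarith [exp_pos (p * y)]

lemma abs_mul_exp_bound {ε p q x : ℝ} (y : ℝ) (hε : 0 < ε)
    (h1 : q ≤ x - ε) (h2 : x + ε ≤ p) :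
    |y * exp (x * y)| ≤ 2 / ε * (exp (p * y) + exp (q * y)) := by
  have hey : ε * |y| ≤ exp (ε * y) + exp (-ε * y) := by
    rcases le_total 0 y with hy | hy
    · rw [abs_of_nonneg hy]
      have h := add_one_le_exp (ε * y)
      linarith [exp_pos (-ε * y)]
    · rw [abs_of_nonpos hy]
      have h := add_one_le_exp (-ε * y)
      have : -ε * y = ε * -y := by ring
      rw [this] at h
      linarith [exp_pos (ε * y), (by rw [this] : exp (-ε * y) = exp (ε * -y))]
  have hA : ε * |y| * exp (x * y) ≤ exp ((x + ε) * y) + exp ((x - ε) * y) := by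
    have h := mul_le_mul_of_nonneg_right hey (exp_pos (x * y)).le
    calc ε * |y| * exp (x * y) ≤ (exp (ε * y) + exp (-ε * y)) * exp (x * y) := h
    _ = exp ((x + ε) * y) + exp ((x - ε) * y) := by
        rw [add_mul, ← exp_add, ← exp_add]; ring_nf
  have hB := exp_mem_bound y (le_trans h1 (by linarith)) h2
  have hC := exp_mem_bound y h1 (le_trans (by linarith) h2)
  have habs : |y * exp (x * y)| = |y| * exp (x * y) := by
    rw [abs_mul, abs_exp]
  rw [habs, div_mul_eq_mul_div, le_div_iff₀ hε]
  nlinarith [exp_pos (p*y), exp_pos (q*y)]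

set_option maxHeartbeats 2000000 in
theorem zero_bias_left_tail_abs
    {Ω : Type*} [MeasurableSpace Ω] (μ : Measure Ω) [IsProbabilityMeasure μ]
    (Y Ystar : Ω → ℝ) (hY : Measurable Y) (hYstar : Measurable Ystar)
    (σ2 : ℝ) (hσ2 : 0 < σ2)
    (hmean : ∫ ω, Y ω ∂μ = 0) (hL2 : MemLp Y 2 μ) (hvar : variance Y μ = σ2)
    (hzb : ZeroBiased μ Y Ystar σ2)
    (c : ℝ) (hc : 0 < c)
    (hbdd : ∀ᵐ ω ∂μ, |Ystar ω - Y ω| ≤ c)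
    (hmgf : ∀ s ∈ Set.Ioc (-(2 / c)) (0 : ℝ), Integrable (fun ω => exp (s * Y ω)) μ) :
    ∀ t : ℝ, 0 ≤ t →
      (μ {ω | Y ω ≤ -t}).toReal ≤ exp (-(t ^ 2) / (10 * σ2 / 3 + c * t)) := by
  -- Step 0: zero-bias distribution facts
  have hstar : ∀ u ∈ Set.Ioc (-(2 / c)) (0 : ℝ),
      Integrable (fun ω => exp (u * Ystar ω)) μ ∧
      ∫ ω, exp (u * Ystar ω) ∂μ ≤ exp (-(u * c)) * mgf Y μ u := by
    intro u hu
    have hptw : ∀ᵐ ω ∂μ, exp (u * Ystar ω) ≤ exp (-(u * c)) * exp (u * Y ω) := by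
      filter_upwards [hbdd] with ω hω
      rw [← exp_add]
      apply exp_le_exp.2
      obtain ⟨h1, h2⟩ := abs_le.1 hω
      nlinarith [mul_nonneg (neg_nonneg.2 hu.2) (by linarith : (0:ℝ) ≤ Ystar ω - Y ω + c)]
    have hint : Integrable (fun ω => exp (u * Ystar ω)) μ := by
      refine Integrable.mono' ((hmgf u hu).const_mul (exp (-(u * c)))) ?_ ?_
      · exact ((hYstar.const_mul u).exp).aestronglyMeasurable
      · filter_upwards [hptw] with ω hω
        rw [Real.norm_eq_abs, abs_exp]; exact hω
    refine ⟨hint, ?_⟩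
    have h := integral_mono_ae hint ((hmgf u hu).const_mul (exp (-(u * c)))) hptw
    rw [integral_const_mul] at h
    exact h
  -- Step 1: derivative of the mgf on the open interval
  have hderiv : ∀ u ∈ Set.Ioo (-(2 / c)) (0 : ℝ),
      Integrable (fun ω => Y ω * exp (u * Y ω)) μ ∧
      HasDerivAt (fun x => mgf Y μ x) (∫ ω, Y ω * exp (u * Y ω) ∂μ) u := by
    intro u hu
    obtain ⟨hu1, hu2⟩ := hu
    set ε : ℝ := min (u + 2 / c) (-u) / 4 with hε
    clear_value ε
    have hε1 : ε ≤ (u + 2 / c) / 4 := by rw [hε]; gcongr; exact min_le_left _ _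
    have hε2 : ε ≤ -u / 4 := by rw [hε]; gcongr; exact min_le_right _ _
    have hε0 : 0 < ε := by
      rw [hε]
      have h := lt_min (by linarith : (0:ℝ) < u + 2 / c) (by linarith : (0:ℝ) < -u)
      linarith
    set p : ℝ := u + 2 * ε with hp
    clear_value p
    set q : ℝ := u - 2 * ε with hq
    clear_value q
    have hpmem : p ∈ Set.Ioc (-(2 / c)) (0 : ℝ) :=
      ⟨by rw [hp]; nlinarith, by rw [hp]; nlinarith⟩
    have hqmem : q ∈ Set.Ioc (-(2 / c)) (0 : ℝ) :=
      ⟨by rw [hq]; nlinarith, by rw [hq]; nlinarith⟩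
    have hbint : Integrable (fun ω => 2 / ε * (exp (p * Y ω) + exp (q * Y ω))) μ :=
      ((hmgf p hpmem).add (hmgf q hqmem)).const_mul _
    have h_bound : ∀ᵐ ω ∂μ, ∀ x ∈ Metric.ball u ε,
        ‖Y ω * exp (x * Y ω)‖ ≤ 2 / ε * (exp (p * Y ω) + exp (q * Y ω)) := by
      refine Filter.Eventually.of_forall fun ω x hx => ?_
      rw [Real.norm_eq_abs]
      have hxu := abs_lt.1 (by rwa [Metric.mem_ball, Real.dist_eq] at hx)
      exact abs_mul_exp_bound (Y ω) hε0 (by rw [hq]; linarith [hxu.1])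
        (by rw [hp]; linarith [hxu.2])
    have h_diff : ∀ᵐ ω ∂μ, ∀ x ∈ Metric.ball u ε,
        HasDerivAt (fun n => exp (n * Y ω)) (Y ω * exp (x * Y ω)) x :=
      Filter.Eventually.of_forall fun ω x _ => by
        simpa [mul_comm] using (hasDerivAt_mul_const (Y ω)).exp
    have key := hasDerivAt_integral_of_dominated_loc_of_deriv_le (𝕜 := ℝ)
      (F := fun x ω => exp (x * Y ω)) (F' := fun x ω => Y ω * exp (x * Y ω))
      (x₀ := u) (bound := fun ω => 2 / ε * (exp (p * Y ω) + exp (q * Y ω))) (Metric.ball_mem_nhds u hε0)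
      (Filter.Eventually.of_forall fun x => ((hY.const_mul x).exp).aestronglyMeasurable)
      (hmgf u ⟨hu1, hu2.le⟩)
      ((hY.mul ((hY.const_mul u).exp)).aestronglyMeasurable)
      h_bound hbint h_diff
    exact key
  -- Step 2: zero-bias identity for exponentials
  have hzb' : ∀ u ∈ Set.Ioo (-(2 / c)) (0 : ℝ),
      ∫ ω, Y ω * exp (u * Y ω) ∂μ = σ2 * (u * ∫ ω, exp (u * Ystar ω) ∂μ) := by
    intro u hu
    have hf : ∀ x : ℝ, HasDerivAt (fun y => exp (u * y)) (u * exp (u * x)) x := by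
      intro x
      simpa [mul_comm] using ((hasDerivAt_id x).const_mul u).exp
    have h2 : Integrable (fun ω => u * exp (u * Ystar ω)) μ :=
      ((hstar u ⟨hu.1, hu.2.le⟩).1).const_mul u
    have h := hzb (fun y => exp (u * y)) (fun y => u * exp (u * y)) hf (hderiv u hu).1 h2
    rw [h, integral_const_mul]
  -- main argument
  intro t ht
  rcases eq_or_lt_of_le ht with rfl | ht0
  · have h1 : (μ {ω | Y ω ≤ -(0:ℝ)}).toReal ≤ 1 := by
      have := prob_le_one (μ := μ) (s := {ω | Y ω ≤ -(0:ℝ)})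
      simpa using ENNReal.toReal_mono (by simp) this
    calc (μ {ω | Y ω ≤ -(0:ℝ)}).toReal ≤ 1 := h1
    _ ≤ _ := by norm_num
  · set D : ℝ := 5 * σ2 / 3 + c * t / 2 with hD
    clear_value D
    have hDpos : 0 < D := by rw [hD]; positivity
    set s : ℝ := -t / D with hs
    clear_value s
    have hs_neg : s < 0 := by rw [hs]; exact div_neg_of_neg_of_pos (by linarith) hDpos
    have hs_lb : -(2 / c) < s := by
      rw [hs, neg_div, neg_lt_neg_iff, div_lt_div_iff₀ hDpos hc]
      nlinarith
    have hsmem : s ∈ Set.Ioc (-(2 / c)) (0 : ℝ) := ⟨hs_lb, hs_neg.le⟩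
    set B : ℝ := σ2 * exp (-(s * c)) with hB
    clear_value B
    have hBpos : 0 < B := by rw [hB]; positivity
    -- the mgf bound
    have hmle : mgf Y μ s ≤ exp (B / 2 * s ^ 2) := by
      have hmpos : ∀ u ∈ Set.Icc s (0:ℝ), 0 < mgf Y μ u := fun u hu =>
        mgf_pos (hmgf u ⟨lt_of_lt_of_le hs_lb hu.1, hu.2⟩)
      have hcont : ContinuousOn (fun x => mgf Y μ x) (Set.Icc s 0) := by
        have h : ContinuousOn (fun x => ∫ ω, exp (x * Y ω) ∂μ) (Set.Icc s 0) := by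
          apply continuousOn_of_dominated
            (bound := fun ω => exp (0 * Y ω) + exp (s * Y ω))
          · intro x _; exact ((hY.const_mul x).exp).aestronglyMeasurable
          · intro x hx
            refine Filter.Eventually.of_forall fun ω => ?_
            rw [Real.norm_eq_abs, abs_exp]
            exact exp_mem_bound (Y ω) hx.1 hx.2
          · exact (hmgf 0 ⟨neg_lt_zero.2 (by positivity), le_refl 0⟩).add (hmgf s hsmem)
          · refine Filter.Eventually.of_forall fun ω => ?_
            exact (Real.continuous_exp.comp (continuous_mul_right (Y ω))).continuousOn
        exact h
      have hderivg : ∀ x ∈ Set.Ioo s (0:ℝ),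
          HasDerivAt (fun u => Real.log (mgf Y μ u) - B / 2 * u ^ 2)
            ((∫ ω, Y ω * exp (x * Y ω) ∂μ) / mgf Y μ x - B / 2 * (2 * x)) x := by
        intro x hx
        have hxmem : x ∈ Set.Ioo (-(2/c)) (0:ℝ) := ⟨hs_lb.trans hx.1, hx.2⟩
        have h2 : mgf Y μ x ≠ 0 := (hmpos x ⟨hx.1.le, hx.2.le⟩).ne'
        have h4 : HasDerivAt (fun u : ℝ => B / 2 * u ^ 2) (B / 2 * (2 * x)) x := by
          simpa using (hasDerivAt_pow 2 x).const_mul (B / 2)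
        exact ((hderiv x hxmem).2.log h2).sub h4
      have hgmono : MonotoneOn (fun u => Real.log (mgf Y μ u) - B / 2 * u ^ 2)
          (Set.Icc s 0) := by
        apply monotoneOn_of_deriv_nonneg (convex_Icc s 0)
        · exact (ContinuousOn.log hcont fun x hx => (hmpos x hx).ne').sub
            (continuous_const.mul (continuous_pow 2)).continuousOn
        · rw [interior_Icc]
          intro x hx
          exact ((hderivg x hx).differentiableAt).differentiableWithinAt
        · rw [interior_Icc]
          intro x hx
          rw [(hderivg x hx).deriv]
          have hxmem : x ∈ Set.Ioo (-(2/c)) (0:ℝ) := ⟨hs_lb.trans hx.1, hx.2⟩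
          have hm := hmpos x ⟨hx.1.le, hx.2.le⟩
          have hI := (hstar x ⟨hxmem.1, hxmem.2.le⟩).2
          rw [hzb' x hxmem, sub_nonneg, le_div_iff₀ hm]
          have hexp : exp (-(x * c)) ≤ exp (-(s * c)) :=
            exp_le_exp.2 (by nlinarith [mul_le_mul_of_nonneg_right hx.1.le hc.le])
          have hprod : (0:ℝ) ≤ (σ2 * (-x)) *
              (exp (-(s*c)) * mgf Y μ x - ∫ ω, exp (x * Ystar ω) ∂μ) := by
            apply mul_nonneg (mul_nonneg hσ2.le (by linarith [hx.2]))
            have h5 : ∫ ω, exp (x * Ystar ω) ∂μ ≤ exp (-(s*c)) * mgf Y μ x :=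
              hI.trans (mul_le_mul_of_nonneg_right hexp hm.le)
            linarith
          rw [hB]
          nlinarith [hprod]
      have h0 := hgmono (Set.mem_Icc.2 ⟨le_refl s, hs_neg.le⟩)
        (Set.mem_Icc.2 ⟨hs_neg.le, le_refl 0⟩) hs_neg.le
      simp only [mgf_zero, Real.log_one] at h0
      have hgs : Real.log (mgf Y μ s) ≤ B / 2 * s ^ 2 := by
        have : (0:ℝ) - B / 2 * 0 ^ 2 = 0 := by ring
        nlinarith [h0]
      have hmpos' : 0 < mgf Y μ s := hmpos s (Set.mem_Icc.2 ⟨le_refl s, hs_neg.le⟩)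
      calc mgf Y μ s = exp (Real.log (mgf Y μ s)) := (exp_log hmpos').symm
      _ ≤ exp (B / 2 * s ^ 2) := exp_le_exp.2 hgs
    -- Chernoff
    have hmarkov := measure_le_le_exp_mul_mgf (X := Y) (μ := μ) (t := s) (-t)
      hs_neg.le (hmgf s hsmem)
    -- final arithmetic
    have hsc : -(s * c) = c * t / D := by rw [hs]; field_simp
    have hkey : σ2 * exp (c * t / D) ≤ D := by
      set x : ℝ := c * t / D with hx
      clear_value x
      have h1 : (2 - x) * exp x ≤ exp 1 := by
        calc (2 - x) * exp x ≤ exp (1 - x) * exp x :=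
          mul_le_mul_of_nonneg_right (by linarith [add_one_le_exp (1 - x)]) (exp_pos x).le
        _ = exp 1 := by rw [← exp_add]; ring_nf
      have h2 : exp 1 ≤ 10 / 3 := by
        have := exp_one_lt_d9
        norm_num at this ⊢
        linarith
      have hDx : D * x = c * t := by rw [hx]; field_simp
      have hx2 : x < 2 := by
        rw [hx, div_lt_iff₀ hDpos]
        nlinarith
      have h3 : σ2 * ((2 - x) * exp x) ≤ σ2 * (10 / 3) :=
        mul_le_mul_of_nonneg_left (h1.trans h2) hσ2.le
      have h4 : σ2 * (10 / 3) = D * (2 - x) := by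
        rw [mul_sub, hDx, hD]; ring
      have h5 : (2 - x) * (σ2 * exp x) ≤ (2 - x) * D := by nlinarith
      exact le_of_mul_le_mul_left h5 (by linarith)
    have hfinal : s * t + B / 2 * s ^ 2 ≤ -(t ^ 2) / (10 * σ2 / 3 + c * t) := by
      have h2D : 10 * σ2 / 3 + c * t = 2 * D := by rw [hD]; ring
      rw [h2D, hB, hsc, hs]
      have hD2 : (0:ℝ) < 2 * D ^ 2 := by positivity
      have e1 : -t / D * t + σ2 * exp (c * t / D) / 2 * (-t / D) ^ 2
          = (σ2 * exp (c * t / D) * t ^ 2 - 2 * D * t ^ 2) / (2 * D ^ 2) := by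
        field_simp; ring
      rw [e1, div_le_div_iff₀ hD2 (by positivity)]
      nlinarith [mul_le_mul_of_nonneg_right hkey (by positivity : (0:ℝ) ≤ t ^ 2 * (2 * D))]
    calc (μ {ω | Y ω ≤ -t}).toReal ≤ exp (-s * -t) * mgf Y μ s := hmarkov
    _ ≤ exp (s * t) * exp (B / 2 * s ^ 2) := by
        rw [show -s * -t = s * t by ring]
        exact mul_le_mul_of_nonneg_left hmle (exp_pos _).le
    _ = exp (s * t + B / 2 * s ^ 2) := (exp_add _ _).symm
    _ ≤ exp (-(t ^ 2) / (10 * σ2 / 3 + c * t)) := exp_le_exp.2 hfinal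
end

section
/- Let Y be a mean zero random variable with variance σ² ∈ (0,∞), and let Y* be defined on the same probability space and have the Y-zero biased distribution. Suppose Y* − Y ≤ c almost surely for some constant c > 0. Fix t > e and set θ = (log t − log log t)/c; if E[exp(θY)] is finite, then P(Y ≥ t) ≤ exp(−(t/c)(log t − log log t − σ²/c)). -/
open MeasureTheory ProbabilityTheory Real

private lemma exp_bound_aux {s θ y : ℝ} (h0 : 0 ≤ s) (hs : s ≤ θ) :
    Real.exp (s * y) ≤ 1 + Real.exp (θ * y) := by
  rcases le_or_gt 0 y with hy | hy
  · have h1 : s * y ≤ θ * y := mul_le_mul_of_nonneg_right hs hy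
    have := Real.exp_le_exp.2 h1
    linarith
  · have h1 : s * y ≤ 0 := mul_nonpos_of_nonneg_of_nonpos h0 hy.le
    have h2 : Real.exp (s * y) ≤ 1 := by
      calc Real.exp (s * y) ≤ Real.exp 0 := Real.exp_le_exp.2 h1
      _ = 1 := Real.exp_zero
    have := Real.exp_pos (θ * y)
    linarith

private lemma abs_mul_exp_aux {d θ s y : ℝ} (hd : 0 < d) (hds : d ≤ s) (hsd : s + d ≤ θ) :
    |y * Real.exp (s * y)| ≤ (1 + Real.exp (θ * y)) / d := by
  rw [abs_mul, Real.abs_exp, le_div_iff₀ hd]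
  rcases le_or_gt 0 y with hy | hy
  · have h1 : d * y ≤ Real.exp (d * y) := by linarith [Real.add_one_le_exp (d * y)]
    calc |y| * Real.exp (s * y) * d = (d * y) * Real.exp (s * y) := by
          rw [abs_of_nonneg hy]; ring
      _ ≤ Real.exp (d * y) * Real.exp (s * y) :=
          mul_le_mul_of_nonneg_right h1 (Real.exp_pos _).le
      _ = Real.exp (d * y + s * y) := (Real.exp_add _ _).symm
      _ ≤ Real.exp (θ * y) := Real.exp_le_exp.2 (by nlinarith)
      _ ≤ 1 + Real.exp (θ * y) := by linarith
  · have h1 : d * (-y) ≤ Real.exp (d * (-y)) := by linarith [Real.add_one_le_exp (d * (-y))]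
    calc |y| * Real.exp (s * y) * d = (d * (-y)) * Real.exp (s * y) := by
          rw [abs_of_neg hy]; ring
      _ ≤ Real.exp (d * (-y)) * Real.exp (s * y) :=
          mul_le_mul_of_nonneg_right h1 (Real.exp_pos _).le
      _ = Real.exp (d * (-y) + s * y) := (Real.exp_add _ _).symm
      _ ≤ Real.exp 0 := Real.exp_le_exp.2 (by nlinarith)
      _ = 1 := Real.exp_zero
      _ ≤ 1 + Real.exp (θ * y) := by linarith [Real.exp_pos (θ * y)]


theorem zero_bias_right_tail_tlogt
    {Ω : Type*} [MeasurableSpace Ω] (μ : Measure Ω) [IsProbabilityMeasure μ]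
    (Y Ystar : Ω → ℝ) (hY : Measurable Y) (hYstar : Measurable Ystar)
    (σ2 : ℝ) (hσ2 : 0 < σ2)
    (hmean : ∫ ω, Y ω ∂μ = 0) (hL2 : MemLp Y 2 μ) (hvar : variance Y μ = σ2)
    (hzb : ZeroBiased μ Y Ystar σ2)
    (c : ℝ) (hc : 0 < c)
    (hbdd : ∀ᵐ ω ∂μ, Ystar ω - Y ω ≤ c)
    (t : ℝ) (ht : Real.exp 1 < t)
    (hmgf : Integrable (fun ω => exp ((Real.log t - Real.log (Real.log t)) / c * Y ω)) μ) :
    (μ {ω | t ≤ Y ω}).toReal ≤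
      exp (-(t / c) * (Real.log t - Real.log (Real.log t) - σ2 / c)) := by
  have he1 : (1:ℝ) < Real.exp 1 := by
    have := Real.exp_one_gt_d9; norm_num at this; linarith
  have ht1 : 1 < t := lt_trans he1 ht
  have ht0 : 0 < t := by linarith
  have hlt : 1 < Real.log t := by
    have := Real.log_lt_log (Real.exp_pos 1) ht
    simpa using this
  have hlt0 : 0 < Real.log t := by linarith
  have hll0 : 0 ≤ Real.log (Real.log t) := Real.log_nonneg hlt.le
  have hlog_self : Real.log t < t := by
    have := Real.log_le_sub_one_of_pos ht0; linarith
  have hlog_lt : Real.log (Real.log t) < Real.log t :=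
    Real.log_lt_log hlt0 hlog_self
  set θ : ℝ := (Real.log t - Real.log (Real.log t)) / c with hθdef
  have hθpos : 0 < θ := div_pos (by linarith) hc
  have hθc : θ * c = Real.log t - Real.log (Real.log t) := div_mul_cancel₀ _ hc.ne'
  have hexpθc : Real.exp (θ * c) = t / Real.log t := by
    rw [hθc, Real.exp_sub, Real.exp_log ht0, Real.exp_log hlt0]
  have hboundInt : Integrable (fun ω => 1 + Real.exp (θ * Y ω)) μ :=
    (integrable_const (1:ℝ)).add hmgf
  -- integrability of exp(s * Y) on [0, θ]
  have hIntY : ∀ s, 0 ≤ s → s ≤ θ → Integrable (fun ω => Real.exp (s * Y ω)) μ := by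
    intro s h0 hs
    refine Integrable.mono' hboundInt ((hY.const_mul s).exp.aestronglyMeasurable) ?_
    filter_upwards with ω
    rw [Real.norm_eq_abs, Real.abs_exp]
    exact exp_bound_aux h0 hs
  -- derivative of the mgf
  have hDeriv : ∀ s ∈ Set.Ioo (0:ℝ) θ,
      Integrable (fun ω => Y ω * Real.exp (s * Y ω)) μ ∧
      HasDerivAt (mgf Y μ) (∫ ω, Y ω * Real.exp (s * Y ω) ∂μ) s := by
    intro s hs
    obtain ⟨hs0, hsθ⟩ := hs
    set d : ℝ := min s (θ - s) / 2 with hd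
    have hd0 : 0 < d := by
      have : 0 < min s (θ - s) := lt_min hs0 (by linarith)
      positivity
    have hds : 2 * d ≤ s := by
      have := min_le_left s (θ - s); rw [hd]; linarith
    have hdθ : s + 2 * d ≤ θ := by
      have := min_le_right s (θ - s); rw [hd]; linarith
    have key := hasDerivAt_integral_of_dominated_loc_of_deriv_le (μ := μ)
      (F := fun x ω => Real.exp (x * Y ω)) (F' := fun x ω => Y ω * Real.exp (x * Y ω))
      (x₀ := s) (bound := fun ω => (1 + Real.exp (θ * Y ω)) / d) (Metric.ball_mem_nhds s hd0)
      (Filter.Eventually.of_forall fun x => ((hY.const_mul x).exp.aestronglyMeasurable))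
      (hIntY s hs0.le hsθ.le)
      ((hY.mul ((hY.const_mul s).exp)).aestronglyMeasurable)
      ?_ (hboundInt.div_const d) ?_
    · exact ⟨key.1, key.2⟩
    · filter_upwards with ω x hx
      rw [Metric.mem_ball, Real.dist_eq, abs_sub_lt_iff] at hx
      rw [Real.norm_eq_abs]
      exact abs_mul_exp_aux hd0 (by linarith) (by linarith)
    · filter_upwards with ω x _
      simpa [mul_comm] using ((hasDerivAt_mul_const (Y ω)).exp
        : HasDerivAt (fun x => Real.exp (x * Y ω)) (Real.exp (x * Y ω) * Y ω) x)
  have hmgf_eq : ∀ s : ℝ, mgf Y μ s = ∫ ω, Real.exp (s * Y ω) ∂μ := fun s => rfl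
  have hmgf_pos : ∀ s ∈ Set.Icc (0:ℝ) θ, 0 < mgf Y μ s := fun s hs =>
    mgf_pos (hIntY s hs.1 hs.2)
  -- the derivative bound from zero-biasing
  have hm'le : ∀ s ∈ Set.Ioo (0:ℝ) θ,
      ∫ ω, Y ω * Real.exp (s * Y ω) ∂μ ≤ σ2 * s * Real.exp (s * c) * mgf Y μ s := by
    intro s hs
    have hIntS : Integrable (fun ω => Real.exp (s * Y ω)) μ := hIntY s hs.1.le hs.2.le
    have hIntStar : Integrable (fun ω => Real.exp (s * Ystar ω)) μ := by
      refine Integrable.mono' (hIntS.const_mul (Real.exp (s * c)))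
        ((hYstar.const_mul s).exp.aestronglyMeasurable) ?_
      filter_upwards [hbdd] with ω hω
      rw [Real.norm_eq_abs, Real.abs_exp, ← Real.exp_add]
      apply Real.exp_le_exp.2
      nlinarith [hs.1]
    have hfd : ∀ x : ℝ, HasDerivAt (fun x => Real.exp (s * x)) (s * Real.exp (s * x)) x := by
      intro x
      simpa [mul_comm] using (((hasDerivAt_id x).const_mul s).exp)
    have hzb' := hzb (fun x => Real.exp (s * x)) (fun x => s * Real.exp (s * x)) hfd
      (hDeriv s hs).1 (hIntStar.const_mul s)
    rw [hzb']
    simp only [integral_const_mul]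
    have hle : ∫ ω, Real.exp (s * Ystar ω) ∂μ
        ≤ Real.exp (s * c) * ∫ ω, Real.exp (s * Y ω) ∂μ := by
      rw [← integral_const_mul]
      refine integral_mono_ae hIntStar (hIntS.const_mul _) ?_
      filter_upwards [hbdd] with ω hω
      rw [← Real.exp_add]
      exact Real.exp_le_exp.2 (by nlinarith [hs.1])
    have hkey : 0 ≤ σ2 * s * (Real.exp (s * c) * (∫ ω, Real.exp (s * Y ω) ∂μ)
        - ∫ ω, Real.exp (s * Ystar ω) ∂μ) :=
      mul_nonneg (mul_nonneg hσ2.le hs.1.le) (sub_nonneg.2 hle)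
    rw [hmgf_eq]
    nlinarith [hkey]
  -- the comparison function F
  set F : ℝ → ℝ := fun s => σ2 / c ^ 2 * ((s * c - 1) * Real.exp (s * c) + 1) with hFdef
  have hF0 : F 0 = 0 := by simp [hFdef]
  have hFderiv : ∀ s : ℝ, HasDerivAt F (σ2 * s * Real.exp (s * c)) s := by
    intro s
    have h1 : HasDerivAt (fun s : ℝ => s * c) c s := hasDerivAt_mul_const c
    have h2 : HasDerivAt (fun s : ℝ => Real.exp (s * c)) (Real.exp (s * c) * c) s := h1.exp
    have h3 : HasDerivAt (fun s : ℝ => (s * c - 1) * Real.exp (s * c) + 1)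
        (c * Real.exp (s * c) + (s * c - 1) * (Real.exp (s * c) * c)) s :=
      ((h1.sub_const 1).mul h2).add_const 1
    have h4 := h3.const_mul (σ2 / c ^ 2)
    refine h4.congr_deriv ?_
    rw [div_mul_eq_mul_div, div_eq_iff (by positivity)]
    ring
  have hFcont : Continuous F := continuous_iff_continuousAt.2 fun s =>
    (hFderiv s).differentiableAt.continuousAt
  -- the auxiliary function h = mgf * exp(-F)
  set g : ℝ → ℝ := fun s => mgf Y μ s * Real.exp (-F s) with hgdef
  have hgderiv : ∀ s ∈ Set.Ioo (0:ℝ) θ,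
      HasDerivAt g ((∫ ω, Y ω * Real.exp (s * Y ω) ∂μ) * Real.exp (-F s)
        + mgf Y μ s * (Real.exp (-F s) * -(σ2 * s * Real.exp (s * c)))) s := by
    intro s hs
    exact (hDeriv s hs).2.mul ((hFderiv s).neg.exp)
  have hgderiv_nonpos : ∀ s ∈ Set.Ioo (0:ℝ) θ, deriv g s ≤ 0 := by
    intro s hs
    rw [(hgderiv s hs).deriv]
    have h1 := hm'le s hs
    have h2 := (Real.exp_pos (-F s)).le
    have h3 := (hmgf_pos s ⟨hs.1.le, hs.2.le⟩).le
    nlinarith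
  -- continuity of mgf at 0 from the right
  have hcont0 : ContinuousWithinAt (mgf Y μ) (Set.Icc 0 θ) 0 := by
    have : ContinuousWithinAt (fun x => ∫ ω, Real.exp (x * Y ω) ∂μ) (Set.Icc 0 θ) 0 := by
      apply continuousWithinAt_of_dominated (bound := fun ω => 1 + Real.exp (θ * Y ω))
      · exact Filter.Eventually.of_forall fun x => ((hY.const_mul x).exp.aestronglyMeasurable)
      · apply Filter.eventually_of_mem self_mem_nhdsWithin
        intro x hx
        filter_upwards with ω
        rw [Real.norm_eq_abs, Real.abs_exp]
        exact exp_bound_aux hx.1 hx.2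
      · exact hboundInt
      · filter_upwards with ω
        exact (Continuous.continuousWithinAt (by fun_prop))
    exact this
  -- the main bound for each s in (0, θ)
  have hmain : ∀ s ∈ Set.Ioo (0:ℝ) θ,
      (μ {ω | t ≤ Y ω}).toReal ≤ Real.exp (-s * t + F s) := by
    intro s hs
    have hconts : ContinuousOn g (Set.Icc 0 s) := by
      apply ContinuousOn.mul ?_ (Continuous.continuousOn (by fun_prop))
      intro x hx
      rcases eq_or_lt_of_le hx.1 with h0 | h0
      · rw [← h0]
        exact (hcont0.mono (Set.Icc_subset_Icc le_rfl hs.2.le))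
      · exact ((hDeriv x ⟨h0, lt_of_le_of_lt hx.2 hs.2⟩).2.continuousAt).continuousWithinAt
    have hanti : AntitoneOn g (Set.Icc 0 s) := by
      apply antitoneOn_of_deriv_nonpos (convex_Icc 0 s) hconts
      · intro x hx
        rw [interior_Icc] at hx
        exact (hgderiv x ⟨hx.1, lt_trans hx.2 hs.2⟩).differentiableAt.differentiableWithinAt
      · intro x hx
        rw [interior_Icc] at hx
        exact hgderiv_nonpos x ⟨hx.1, lt_trans hx.2 hs.2⟩
    have hg0 : g 0 = 1 := by
      simp [hgdef, hF0, mgf_zero]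
    have hg1 : g s ≤ 1 := by
      have h := hanti (Set.left_mem_Icc.2 hs.1.le) (Set.right_mem_Icc.2 hs.1.le) hs.1.le
      exact h.trans (le_of_eq hg0)
    have hmgf_le : mgf Y μ s ≤ Real.exp (F s) := by
      have h1 : mgf Y μ s * Real.exp (-F s) ≤ 1 := hg1
      calc mgf Y μ s = mgf Y μ s * Real.exp (-F s) * Real.exp (F s) := by
            rw [mul_assoc, ← Real.exp_add]; simp
        _ ≤ 1 * Real.exp (F s) := mul_le_mul_of_nonneg_right h1 (Real.exp_pos _).le
        _ = Real.exp (F s) := one_mul _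
    calc (μ {ω | t ≤ Y ω}).toReal ≤ Real.exp (-s * t) * mgf Y μ s :=
          measure_ge_le_exp_mul_mgf t hs.1.le (hIntY s hs.1.le hs.2.le)
      _ ≤ Real.exp (-s * t) * Real.exp (F s) := by
          exact mul_le_mul_of_nonneg_left hmgf_le (Real.exp_pos _).le
      _ = Real.exp (-s * t + F s) := (Real.exp_add _ _).symm
  -- pass to the limit s → θ⁻
  have hlim : Filter.Tendsto (fun s => Real.exp (-s * t + F s)) (nhdsWithin θ (Set.Iio θ))
      (nhds (Real.exp (-θ * t + F θ))) := by
    apply (Continuous.tendsto (by fun_prop) θ).mono_left nhdsWithin_le_nhds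
  have hev : ∀ᶠ s in nhdsWithin θ (Set.Iio θ),
      (μ {ω | t ≤ Y ω}).toReal ≤ Real.exp (-s * t + F s) := by
    filter_upwards [Ioo_mem_nhdsLT_of_mem (Set.mem_Ioc.2 ⟨hθpos, le_refl θ⟩)] with s hs
    exact hmain s hs
  have hfinal : (μ {ω | t ≤ Y ω}).toReal ≤ Real.exp (-θ * t + F θ) := ge_of_tendsto hlim hev
  refine le_trans hfinal (Real.exp_le_exp.2 ?_)
  -- arithmetic: -θ t + F θ ≤ -(t/c)(log t - log log t - σ2/c)
  have hFθ : F θ ≤ t * σ2 / c ^ 2 := by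
    rw [hFdef]
    simp only
    rw [hexpθc, hθc]
    have htL : Real.log t * (t / Real.log t) = t := by field_simp
    have h2 : (1:ℝ) ≤ t / Real.log t := by
      rw [le_div_iff₀ hlt0]; linarith
    have h1 : (1:ℝ) ≤ (Real.log (Real.log t) + 1) * (t / Real.log t) := by
      nlinarith [mul_nonneg hll0 (le_trans zero_le_one h2)]
    have h3 : (Real.log t - Real.log (Real.log t) - 1) * (t / Real.log t) + 1 ≤ t := by
      nlinarith [htL, h1]
    calc σ2 / c ^ 2 * ((Real.log t - Real.log (Real.log t) - 1) * (t / Real.log t) + 1)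
        ≤ σ2 / c ^ 2 * t := mul_le_mul_of_nonneg_left h3 (by positivity)
      _ = t * σ2 / c ^ 2 := by ring
  have heq : -(t / c) * (Real.log t - Real.log (Real.log t) - σ2 / c)
      = -θ * t + t * σ2 / c ^ 2 := by
    have hc' : c ≠ 0 := hc.ne'
    rw [hθdef]
    field_simp
    ring
  rw [heq]
  linarith
end

section
/- Let Y be a mean zero random variable with variance σ² ∈ (0,∞), and let Y* be defined on the same probability space and have the Y-zero biased distribution. Suppose Y* − Y ≤ c almost surely for some constant c > 0. Fix t > e and set θ = (log t − log log t)/c; if E[exp(θY)] is finite, then P(Y ≥ t) ≤ exp(−(t/(2c))(log t − 2σ²/c)). -/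
open MeasureTheory ProbabilityTheory Real

private lemma key_ptwise (y : ℝ) {x r θ : ℝ} (hx : 0 ≤ x) (hxr : x ≤ r) (hrθ : r < θ) :
    |y * Real.exp (x * y)| ≤ |y| + (θ - r)⁻¹ * Real.exp (θ * y) := by
  rw [abs_mul, abs_of_nonneg (Real.exp_pos _).le]
  rcases le_or_gt y 0 with hy | hy
  · have h1 : Real.exp (x * y) ≤ 1 := by
      rw [Real.exp_le_one_iff]
      exact mul_nonpos_of_nonneg_of_nonpos hx hy
    have hp : 0 < (θ - r)⁻¹ * Real.exp (θ * y) :=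
      mul_pos (inv_pos.mpr (by linarith : (0:ℝ) < θ - r)) (Real.exp_pos (θ * y))
    have h2 : |y| * Real.exp (x * y) ≤ |y| * 1 :=
      mul_le_mul_of_nonneg_left h1 (abs_nonneg y)
    nlinarith [abs_nonneg y]
  · have hθr : (0:ℝ) < θ - r := by linarith
    have h1 : (θ - r) * y ≤ Real.exp ((θ - r) * y) := by
      have := Real.add_one_le_exp ((θ - r) * y)
      linarith
    have h2 : y ≤ (θ - r)⁻¹ * Real.exp ((θ - r) * y) := by
      rw [le_inv_mul_iff₀ hθr]
      linarith
    have h3 : Real.exp (x * y) ≤ Real.exp (r * y) :=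
      Real.exp_le_exp.mpr (mul_le_mul_of_nonneg_right hxr hy.le)
    have h4 : |y| * Real.exp (x * y) ≤ y * Real.exp (r * y) := by
      rw [abs_of_pos hy]
      exact mul_le_mul_of_nonneg_left h3 hy.le
    have h5 : y * Real.exp (r * y) ≤ (θ - r)⁻¹ * Real.exp ((θ - r) * y) * Real.exp (r * y) :=
      mul_le_mul_of_nonneg_right h2 (Real.exp_pos _).le
    have h6 : (θ - r)⁻¹ * Real.exp ((θ - r) * y) * Real.exp (r * y)
        = (θ - r)⁻¹ * Real.exp (θ * y) := by
      rw [mul_assoc, ← Real.exp_add]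
      ring_nf
    nlinarith [abs_nonneg y]

theorem zero_bias_right_tail_tlogt_weak
    {Ω : Type*} [MeasurableSpace Ω] (μ : Measure Ω) [IsProbabilityMeasure μ]
    (Y Ystar : Ω → ℝ) (hY : Measurable Y) (hYstar : Measurable Ystar)
    (σ2 : ℝ) (hσ2 : 0 < σ2)
    (hmean : ∫ ω, Y ω ∂μ = 0) (hL2 : MemLp Y 2 μ) (hvar : variance Y μ = σ2)
    (hzb : ZeroBiased μ Y Ystar σ2)
    (c : ℝ) (hc : 0 < c)
    (hbdd : ∀ᵐ ω ∂μ, Ystar ω - Y ω ≤ c)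
    (t : ℝ) (ht : Real.exp 1 < t)
    (hmgf : Integrable (fun ω => exp ((Real.log t - Real.log (Real.log t)) / c * Y ω)) μ) :
    (μ {ω | t ≤ Y ω}).toReal ≤
      exp (-(t / (2 * c)) * (Real.log t - 2 * σ2 / c)) := by
  have ht0 : (0:ℝ) < t := lt_trans (exp_pos 1) ht
  set L := Real.log t with hLdef
  have hL1 : 1 < L := by
    have h := Real.log_lt_log (exp_pos 1) ht
    rwa [Real.log_exp] at h
  have hL0 : (0:ℝ) < L := by linarith
  have hlogL_lt : Real.log L < L := by
    have := Real.log_le_sub_one_of_pos hL0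
    linarith
  have hlogL_nn : 0 ≤ Real.log L := Real.log_nonneg hL1.le
  set θ := (L - Real.log L) / c with hθdef
  have hθpos : 0 < θ := div_pos (by linarith) hc
  -- 2 log L ≤ L
  have hlog2 : 2 * Real.log L ≤ L := by
    have hs := Real.sq_sqrt hL0.le
    have hls := Real.log_le_sub_one_of_pos (Real.sqrt_pos.mpr hL0)
    have hlsq : Real.log L = 2 * Real.log (Real.sqrt L) := by
      rw [Real.log_sqrt hL0.le]; ring
    nlinarith [Real.sqrt_nonneg L, sq_nonneg (Real.sqrt L - 2)]
  have hθhalf : L / (2 * c) ≤ θ := by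
    rw [hθdef, div_le_div_iff₀ (by positivity) hc]
    nlinarith
  -- Integrability of exp (s * Y) for 0 ≤ s ≤ θ
  have hbnd1 : ∀ x : ℝ, 0 ≤ x → x ≤ θ → ∀ ω, exp (x * Y ω) ≤ 1 + exp (θ * Y ω) := by
    intro x hx0 hxθ ω
    rcases le_or_gt 0 (Y ω) with hy | hy
    · have : x * Y ω ≤ θ * Y ω := mul_le_mul_of_nonneg_right hxθ hy
      have := Real.exp_le_exp.mpr this
      linarith
    · have : exp (x * Y ω) ≤ 1 := by
        rw [Real.exp_le_one_iff]
        exact mul_nonpos_of_nonneg_of_nonpos hx0 hy.le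
      have := (Real.exp_pos (θ * Y ω)).le
      linarith
  have hintA : ∀ s : ℝ, 0 ≤ s → s ≤ θ → Integrable (fun ω => exp (s * Y ω)) μ := by
    intro s hs0 hsθ
    refine Integrable.mono' ((integrable_const 1).add hmgf) ?_ ?_
    · exact ((hY.const_mul s).exp).aestronglyMeasurable
    · filter_upwards with ω
      rw [Real.norm_eq_abs, abs_of_nonneg (Real.exp_pos _).le]
      exact hbnd1 s hs0 hsθ ω
  have hYint : Integrable Y μ := hL2.integrable one_le_two
  have hintB : ∀ s : ℝ, 0 ≤ s → s < θ → Integrable (fun ω => Y ω * exp (s * Y ω)) μ := by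
    intro s hs0 hsθ
    refine Integrable.mono' (hYint.abs.add (hmgf.const_mul (θ - s)⁻¹)) ?_ ?_
    · exact (hY.mul ((hY.const_mul s).exp)).aestronglyMeasurable
    · filter_upwards with ω
      rw [Real.norm_eq_abs]
      exact key_ptwise (Y ω) hs0 le_rfl hsθ
  have hintStar : ∀ s : ℝ, 0 ≤ s → s ≤ θ → Integrable (fun ω => exp (s * Ystar ω)) μ := by
    intro s hs0 hsθ
    refine Integrable.mono' ((hintA s hs0 hsθ).const_mul (exp (s * c))) ?_ ?_
    · exact ((hYstar.const_mul s).exp).aestronglyMeasurable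
    · filter_upwards [hbdd] with ω hω
      rw [Real.norm_eq_abs, abs_of_nonneg (Real.exp_pos _).le, ← Real.exp_add]
      apply Real.exp_le_exp.mpr
      nlinarith
  have hstar_le : ∀ s : ℝ, 0 ≤ s → s ≤ θ →
      ∫ ω, exp (s * Ystar ω) ∂μ ≤ exp (s * c) * ∫ ω, exp (s * Y ω) ∂μ := by
    intro s hs0 hsθ
    rw [← integral_const_mul]
    refine integral_mono_ae (hintStar s hs0 hsθ) ((hintA s hs0 hsθ).const_mul _) ?_
    filter_upwards [hbdd] with ω hω
    rw [← Real.exp_add]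
    apply Real.exp_le_exp.mpr
    nlinarith
  -- the mgf function
  set m : ℝ → ℝ := fun s => ∫ ω, exp (s * Y ω) ∂μ with hmdef
  have hm_pos : ∀ s : ℝ, 0 ≤ s → s ≤ θ → 0 < m s := by
    intro s hs0 hsθ
    exact mgf_pos (hintA s hs0 hsθ)
  -- derivative of m
  have hm_deriv : ∀ s ∈ Set.Ioo (0:ℝ) θ,
      HasDerivAt m (∫ ω, Y ω * exp (s * Y ω) ∂μ) s := by
    intro s hs
    obtain ⟨hs0, hsθ⟩ := hs
    set r : ℝ := (s + θ) / 2 with hrdef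
    set ε : ℝ := min s ((θ - s) / 2) with hεdef
    have hε0 : 0 < ε := lt_min hs0 (by linarith)
    have hrθ : r < θ := by rw [hrdef]; linarith
    have key := hasDerivAt_integral_of_dominated_loc_of_deriv_le
      (μ := μ) (F := fun x ω => exp (x * Y ω)) (F' := fun x ω => Y ω * exp (x * Y ω))
      (x₀ := s) (bound := fun ω => |Y ω| + (θ - r)⁻¹ * exp (θ * Y ω)) (Metric.ball_mem_nhds s hε0)
      (Filter.Eventually.of_forall fun x => ((hY.const_mul x).exp).aestronglyMeasurable)
      (hintA s hs0.le hsθ.le)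
      ((hY.mul ((hY.const_mul s).exp)).aestronglyMeasurable) ?_
      (hYint.abs.add (hmgf.const_mul (θ - r)⁻¹)) ?_
    · exact key.2
    · filter_upwards with ω x hx
      rw [Metric.mem_ball, Real.dist_eq] at hx
      have hx1 : 0 ≤ x := by
        have := abs_lt.mp hx
        have hεs : ε ≤ s := min_le_left _ _
        linarith [this.1]
      have hx2 : x ≤ r := by
        have := abs_lt.mp hx
        have hεs : ε ≤ (θ - s) / 2 := min_le_right _ _
        rw [hrdef]; linarith [this.2]
      exact key_ptwise (Y ω) hx1 hx2 hrθ
    · filter_upwards with ω x _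
      have h := (Real.hasDerivAt_exp (x * Y ω)).comp x (hasDerivAt_mul_const (Y ω))
      simpa [mul_comm, Function.comp_def] using h
  -- zero bias inequality
  have hEb : ∀ s ∈ Set.Ioo (0:ℝ) θ,
      ∫ ω, Y ω * exp (s * Y ω) ∂μ ≤ σ2 * s * exp (s * c) * m s := by
    intro s hs
    obtain ⟨hs0, hsθ⟩ := hs
    have hf : ∀ x : ℝ, HasDerivAt (fun x => exp (s * x)) (s * exp (s * x)) x := by
      intro x
      have h := (Real.hasDerivAt_exp (s * x)).comp x ((hasDerivAt_id x).const_mul s)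
      simpa [mul_comm, Function.comp_def] using h
    have hint1 : Integrable (fun ω => Y ω * exp (s * Y ω)) μ := hintB s hs0.le hsθ
    have hint2 : Integrable (fun ω => s * exp (s * Ystar ω)) μ :=
      (hintStar s hs0.le hsθ.le).const_mul s
    have heq := hzb (fun x => exp (s * x)) (fun x => s * exp (s * x)) hf hint1 hint2
    rw [heq, integral_const_mul]
    have h1 : ∫ ω, exp (s * Ystar ω) ∂μ ≤ exp (s * c) * m s := hstar_le s hs0.le hsθ.le
    have hm0 : 0 < m s := hm_pos s hs0.le hsθ.le
    nlinarith [mul_le_mul_of_nonneg_left h1 (by positivity : (0:ℝ) ≤ σ2 * s)]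
  -- continuity of m on [0, θ]
  have hm_cont : ContinuousOn m (Set.Icc 0 θ) := by
    intro x₀ hx₀
    refine continuousWithinAt_of_dominated
      (F := fun x ω => exp (x * Y ω)) (bound := fun ω => 1 + exp (θ * Y ω))
      (Filter.Eventually.of_forall fun x => ((hY.const_mul x).exp).aestronglyMeasurable) ?_
      ((integrable_const 1).add hmgf) ?_
    · filter_upwards [eventually_mem_nhdsWithin] with x hx
      filter_upwards with ω
      rw [Real.norm_eq_abs, abs_of_nonneg (Real.exp_pos _).le]
      exact hbnd1 x hx.1 hx.2 ω
    · filter_upwards with ω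
      exact (Real.continuous_exp.comp (continuous_id.mul continuous_const)).continuousWithinAt
  -- the comparison function
  set φ : ℝ → ℝ := fun s => σ2 * (s * exp (s * c)) / c with hφdef
  have hφ_deriv : ∀ s : ℝ, HasDerivAt φ
      (σ2 * (exp (s * c) + s * (exp (s * c) * c)) / c) s := by
    intro s
    have h1 : HasDerivAt (fun s : ℝ => exp (s * c)) (exp (s * c) * c) s :=
      by have h := (Real.hasDerivAt_exp (s * c)).comp s (hasDerivAt_mul_const c); exact h
    have h2 : HasDerivAt (fun s : ℝ => s * exp (s * c))
        (1 * exp (s * c) + s * (exp (s * c) * c)) s := (hasDerivAt_id s).mul h1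
    have h3 := (h2.const_mul σ2).div_const c
    simpa [one_mul] using h3
  set g : ℝ → ℝ := fun s => m s * exp (-φ s) with hgdef
  have hg_deriv : ∀ s ∈ Set.Ioo (0:ℝ) θ,
      HasDerivAt g ((∫ ω, Y ω * exp (s * Y ω) ∂μ) * exp (-φ s)
        + m s * (exp (-φ s) * -(σ2 * (exp (s * c) + s * (exp (s * c) * c)) / c))) s := by
    intro s hs
    have h1 : HasDerivAt (fun s => exp (-φ s))
        (exp (-φ s) * -(σ2 * (exp (s * c) + s * (exp (s * c) * c)) / c)) s :=
      by have h := (Real.hasDerivAt_exp (-φ s)).comp s (hφ_deriv s).neg; exact h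
    exact (hm_deriv s hs).mul h1
  have hg_deriv_nonpos : ∀ s ∈ Set.Ioo (0:ℝ) θ, deriv g s ≤ 0 := by
    intro s hs
    rw [(hg_deriv s hs).deriv]
    have hE := hEb s hs
    have hm0 : 0 < m s := hm_pos s hs.1.le hs.2.le
    have he1 : 0 < exp (-φ s) := Real.exp_pos _
    have he2 : 0 < exp (s * c) := Real.exp_pos _
    have hs0 : 0 < s := hs.1
    have key : (∫ ω, Y ω * exp (s * Y ω) ∂μ) * exp (-φ s)
        ≤ σ2 * s * exp (s * c) * m s * exp (-φ s) :=
      mul_le_mul_of_nonneg_right hE he1.le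
    have key2 : m s * (exp (-φ s) * -(σ2 * (exp (s * c) + s * (exp (s * c) * c)) / c))
        = -(m s * exp (-φ s) * σ2 * (exp (s * c) + s * (exp (s * c) * c)) / c) := by ring
    rw [key2]
    have h3 : 0 ≤ m s * exp (-φ s) * σ2 * exp (s * c) / c := by positivity
    have h4 : m s * exp (-φ s) * σ2 * (exp (s * c) + s * (exp (s * c) * c)) / c
        = m s * exp (-φ s) * σ2 * exp (s * c) / c
          + σ2 * s * exp (s * c) * m s * exp (-φ s) := by
      field_simp
    rw [h4]
    linarith [key]
  -- g is antitone on [0, θ]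
  have hg_anti : AntitoneOn g (Set.Icc 0 θ) := by
    refine antitoneOn_of_deriv_nonpos (convex_Icc 0 θ) ?_ ?_ ?_
    · refine hm_cont.mul (Continuous.continuousOn ?_)
      have : Continuous φ := by
        apply Continuous.div_const
        exact continuous_const.mul (continuous_id.mul
          (Real.continuous_exp.comp (continuous_id.mul continuous_const)))
      exact Real.continuous_exp.comp this.neg
    · intro x hx
      rw [interior_Icc] at hx
      exact ((hg_deriv x hx).differentiableAt).differentiableWithinAt
    · intro x hx
      rw [interior_Icc] at hx
      exact hg_deriv_nonpos x hx
  have hg0 : g 0 = 1 := by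
    have hm0 : m 0 = 1 := by
      simp [hmdef]
    have hφ0 : φ 0 = 0 := by simp [hφdef]
    simp [hgdef, hm0, hφ0]
  have hgθ : g θ ≤ 1 := by
    rw [← hg0]
    exact hg_anti (Set.left_mem_Icc.mpr hθpos.le) (Set.right_mem_Icc.mpr hθpos.le) hθpos.le
  have hmθ : m θ ≤ exp (φ θ) := by
    have h2 : m θ * exp (-φ θ) ≤ 1 := hgθ
    calc m θ = m θ * exp (-φ θ) * exp (φ θ) := by
            rw [mul_assoc, ← Real.exp_add]; simp
      _ ≤ 1 * exp (φ θ) := mul_le_mul_of_nonneg_right h2 (Real.exp_pos _).le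
      _ = exp (φ θ) := one_mul _
  -- Chernoff bound
  have hcher : (μ {ω | t ≤ Y ω}).toReal ≤ exp (-θ * t) * mgf Y μ θ :=
    measure_ge_le_exp_mul_mgf t hθpos.le hmgf
  have hmgf_eq : mgf Y μ θ = m θ := rfl
  have hexpθc : exp (θ * c) = t / L := by
    have hθc : θ * c = L - Real.log L := by
      rw [hθdef]; field_simp
    rw [hθc, Real.exp_sub, Real.exp_log ht0, Real.exp_log hL0]
  have h1 : θ * exp (θ * c) ≤ t / c := by
    rw [hexpθc, hθdef, div_mul_div_comm, div_le_div_iff₀ (by positivity) hc]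
    nlinarith [mul_nonneg (mul_nonneg hlogL_nn ht0.le) hc.le]
  have hφθ : φ θ ≤ σ2 * t / c ^ 2 := by
    have h2 : σ2 * (θ * exp (θ * c)) ≤ σ2 * (t / c) :=
      mul_le_mul_of_nonneg_left h1 hσ2.le
    have h3 : σ2 * (θ * exp (θ * c)) / c ≤ σ2 * (t / c) / c :=
      div_le_div_of_nonneg_right h2 hc.le
    have h4 : σ2 * (t / c) / c = σ2 * t / c ^ 2 := by
      field_simp
    rw [hφdef]
    linarith
  have hfinal : -θ * t + φ θ ≤ -(t / (2 * c)) * (L - 2 * σ2 / c) := by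
    have hr : -(t / (2 * c)) * (L - 2 * σ2 / c) = -(t * L / (2 * c)) + σ2 * t / c ^ 2 := by
      field_simp; ring
    have h2 : L / (2 * c) * t ≤ θ * t := mul_le_mul_of_nonneg_right hθhalf ht0.le
    have h3 : L / (2 * c) * t = t * L / (2 * c) := by ring
    linarith
  calc (μ {ω | t ≤ Y ω}).toReal ≤ exp (-θ * t) * mgf Y μ θ := hcher
    _ = exp (-θ * t) * m θ := by rw [hmgf_eq]
    _ ≤ exp (-θ * t) * exp (φ θ) := mul_le_mul_of_nonneg_left hmθ (Real.exp_pos _).le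
    _ = exp (-θ * t + φ θ) := (Real.exp_add _ _).symm
    _ ≤ exp (-(t / (2 * c)) * (L - 2 * σ2 / c)) := Real.exp_le_exp.mpr hfinal
end

section
/- Let Y be a mean zero random variable with variance σ² ∈ (0,∞), and let Y* be defined on the same probability space and have the Y-zero biased distribution. Suppose Y − Y* ≤ c almost surely for some constant c > 0. Fix t > e and set θ = (log t − log log t)/c; if E[exp(−θY)] is finite, then P(Y ≤ −t) ≤ exp(−(t/c)(log t − log log t − σ²/c)). -/
open MeasureTheory ProbabilityTheory Real

lemma zb_mgf_bound {Ω : Type*} [MeasurableSpace Ω] (μ : Measure Ω) [IsProbabilityMeasure μ]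
    (Y Ystar : Ω → ℝ) (hY : Measurable Y) (hYstar : Measurable Ystar)
    (σ2 : ℝ) (hσ2 : 0 < σ2) (hintY : Integrable Y μ)
    (hzb : ZeroBiased μ Y Ystar σ2)
    (c : ℝ) (hc : 0 < c)
    (hbdd : ∀ᵐ ω ∂μ, Y ω - Ystar ω ≤ c)
    (θ : ℝ) (hθ : 0 < θ)
    (hmgf : Integrable (fun ω => exp (-θ * Y ω)) μ) :
    ∫ ω, exp (-θ * Y ω) ∂μ ≤ exp (σ2 / c ^ 2 * (exp (θ * c) * (θ * c - 1) + 1)) := by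
  set m : ℝ → ℝ := fun s => ∫ ω, exp (-s * Y ω) ∂μ with hm
  set A : ℝ → ℝ := fun s => σ2 / c ^ 2 * (exp (s * c) * (s * c - 1) + 1) with hA
  have hFmeas : ∀ s : ℝ, AEStronglyMeasurable (fun ω => exp (-s * Y ω)) μ :=
    fun s => ((hY.const_mul (-s)).exp).aestronglyMeasurable
  have hptb : ∀ s ∈ Set.Icc (0:ℝ) θ, ∀ ω, exp (-s * Y ω) ≤ 1 + exp (-θ * Y ω) := by
    intro s hs ω
    rcases le_or_gt 0 (Y ω) with h | h
    · have h1 : exp (-s * Y ω) ≤ 1 := by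
        rw [Real.exp_le_one_iff]
        nlinarith [hs.1]
      have := Real.exp_pos (-θ * Y ω)
      linarith
    · have h1 : exp (-s * Y ω) ≤ exp (-θ * Y ω) := by
        rw [Real.exp_le_exp]
        nlinarith [hs.2]
      linarith
  have hbound_int : Integrable (fun ω => 1 + exp (-θ * Y ω)) μ := (integrable_const 1).add hmgf
  have hFint : ∀ s ∈ Set.Icc (0:ℝ) θ, Integrable (fun ω => exp (-s * Y ω)) μ := by
    intro s hs
    refine hbound_int.mono' (hFmeas s) (ae_of_all _ fun ω => ?_)
    rw [Real.norm_eq_abs, abs_of_pos (exp_pos _)]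
    exact hptb s hs ω
  have hm_nonneg : ∀ s, 0 ≤ m s := fun s => integral_nonneg fun ω => (exp_pos _).le
  have hderiv : ∀ s ∈ Set.Ioo (0:ℝ) θ,
      Integrable (fun ω => -Y ω * exp (-s * Y ω)) μ ∧
      HasDerivAt m (∫ ω, -Y ω * exp (-s * Y ω) ∂μ) s := by
    intro s hs
    obtain ⟨hs0, hsθ⟩ := hs
    set δ : ℝ := (θ - s) / 2 with hδ
    have hδ0 : 0 < δ := by rw [hδ]; linarith
    have hε0 : 0 < min s δ := lt_min hs0 hδ0
    rw [hm]
    apply hasDerivAt_integral_of_dominated_loc_of_deriv_le (Metric.ball_mem_nhds s hε0)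
      (Filter.Eventually.of_forall fun x => hFmeas x) (hFint s ⟨hs0.le, hsθ.le⟩)
      ((hY.neg.mul ((hY.const_mul (-s)).exp)).aestronglyMeasurable)
      (bound := fun ω => |Y ω| + δ⁻¹ * exp (-θ * Y ω)) ?_
      (hintY.abs.add (hmgf.const_mul _)) ?_
    · refine ae_of_all _ fun ω x hx => ?_
      rw [Metric.mem_ball, Real.dist_eq, abs_lt] at hx
      have hx0 : 0 < x := by have := lt_min_iff.1 hε0; linarith [hx.1, min_le_left s δ]
      have hx1 : x < s + δ := by linarith [hx.2, min_le_right s δ]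
      rcases le_or_gt 0 (Y ω) with h | h
      · have h1 : exp (-x * Y ω) ≤ 1 := by
          rw [Real.exp_le_one_iff]; nlinarith
        have h2 : ‖-Y ω * exp (-x * Y ω)‖ = |Y ω| * exp (-x * Y ω) := by
          rw [norm_mul, Real.norm_eq_abs, Real.norm_eq_abs, abs_neg,
            abs_of_pos (exp_pos _)]
        rw [h2]
        have h3 : |Y ω| * exp (-x * Y ω) ≤ |Y ω| * 1 :=
          mul_le_mul_of_nonneg_left h1 (abs_nonneg _)
        have h4 : (0:ℝ) ≤ δ⁻¹ * exp (-θ * Y ω) := by positivity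
        linarith
      · have hY' : 0 < -Y ω := by linarith
        have e1 : -Y ω ≤ δ⁻¹ * exp (δ * -Y ω) := by
          have k : δ * -Y ω ≤ exp (δ * -Y ω) := by
            linarith [Real.add_one_le_exp (δ * -Y ω)]
          calc -Y ω = δ⁻¹ * (δ * -Y ω) := by field_simp
            _ ≤ δ⁻¹ * exp (δ * -Y ω) := mul_le_mul_of_nonneg_left k (by positivity)
        have h2 : ‖-Y ω * exp (-x * Y ω)‖ = -Y ω * exp (-x * Y ω) := by
          rw [norm_mul, Real.norm_eq_abs, Real.norm_eq_abs, abs_neg,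
            abs_of_neg h, abs_of_pos (exp_pos _)]
        rw [h2]
        calc -Y ω * exp (-x * Y ω) ≤ δ⁻¹ * exp (δ * -Y ω) * exp (-x * Y ω) :=
              mul_le_mul_of_nonneg_right e1 (exp_pos _).le
          _ = δ⁻¹ * exp (δ * -Y ω + -x * Y ω) := by rw [Real.exp_add]; ring
          _ ≤ δ⁻¹ * exp (-θ * Y ω) := by
              have harg : δ * -Y ω + -x * Y ω ≤ -θ * Y ω := by nlinarith
              exact mul_le_mul_of_nonneg_left (Real.exp_le_exp.2 harg) (by positivity)
          _ ≤ |Y ω| + δ⁻¹ * exp (-θ * Y ω) := le_add_of_nonneg_left (abs_nonneg _)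
    · refine ae_of_all _ fun ω x hx => ?_
      have h1 : HasDerivAt (fun x : ℝ => -x * Y ω) (-Y ω) x := by
        simpa using (hasDerivAt_id x).neg.mul_const (Y ω)
      refine h1.exp.congr_deriv ?_
      ring
  have hm'le : ∀ s ∈ Set.Ioo (0:ℝ) θ,
      ∫ ω, -Y ω * exp (-s * Y ω) ∂μ ≤ σ2 * s * exp (s * c) * m s := by
    intro s hs
    have hsIcc : s ∈ Set.Icc (0:ℝ) θ := ⟨hs.1.le, hs.2.le⟩
    have hint1 : Integrable (fun ω => Y ω * exp (-s * Y ω)) μ := by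
      have h0 := (hderiv s hs).1
      have heq : (fun ω => Y ω * exp (-s * Y ω))
          = fun ω => -(-Y ω * exp (-s * Y ω)) := by funext ω; ring
      rw [heq]
      exact h0.neg
    have haebd : ∀ᵐ ω ∂μ, exp (-s * Ystar ω) ≤ exp (s * c) * exp (-s * Y ω) := by
      filter_upwards [hbdd] with ω hω
      have harg : -s * Ystar ω ≤ s * c + -s * Y ω := by nlinarith [hs.1]
      calc exp (-s * Ystar ω) ≤ exp (s * c + -s * Y ω) := Real.exp_le_exp.2 harg
        _ = exp (s * c) * exp (-s * Y ω) := Real.exp_add _ _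
    have hintYs : Integrable (fun ω => exp (-s * Ystar ω)) μ := by
      refine ((hFint s hsIcc).const_mul (exp (s * c))).mono'
        ((hYstar.const_mul (-s)).exp).aestronglyMeasurable ?_
      filter_upwards [haebd] with ω hω
      rw [Real.norm_eq_abs, abs_of_pos (exp_pos _)]
      exact hω
    have hdf : ∀ x : ℝ, HasDerivAt (fun x => exp (-s * x)) (-s * exp (-s * x)) x := by
      intro x
      have h1 : HasDerivAt (fun x : ℝ => -s * x) (-s) x := by
        simpa using (hasDerivAt_id x).const_mul (-s)
      convert h1.exp using 1
      ring
    have hint2 : Integrable (fun ω => -s * exp (-s * Ystar ω)) μ := hintYs.const_mul _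
    have hzbeq := hzb (fun x => exp (-s * x)) (fun x => -s * exp (-s * x)) hdf hint1 hint2
    have heq2 : ∫ ω, -Y ω * exp (-s * Y ω) ∂μ = σ2 * s * ∫ ω, exp (-s * Ystar ω) ∂μ := by
      have hneg : (fun ω => -Y ω * exp (-s * Y ω)) = fun ω => -(Y ω * exp (-s * Y ω)) := by
        funext ω; ring
      rw [hneg, integral_neg, hzbeq, integral_const_mul]
      ring
    have hile : ∫ ω, exp (-s * Ystar ω) ∂μ ≤ exp (s * c) * m s := by
      have := integral_mono_ae hintYs ((hFint s hsIcc).const_mul (exp (s * c))) haebd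
      rwa [integral_const_mul] at this
    rw [heq2]
    have hσs : (0:ℝ) ≤ σ2 * s := by nlinarith [hs.1]
    calc σ2 * s * ∫ ω, exp (-s * Ystar ω) ∂μ ≤ σ2 * s * (exp (s * c) * m s) :=
          mul_le_mul_of_nonneg_left hile hσs
      _ = σ2 * s * exp (s * c) * m s := by ring
  have hA' : ∀ s : ℝ, HasDerivAt A (σ2 * s * exp (s * c)) s := by
    intro s
    have h1 : HasDerivAt (fun u : ℝ => u * c) c s := by
      simpa using (hasDerivAt_id s).mul_const c
    have h4 := ((h1.exp.mul (h1.sub_const 1)).add_const 1).const_mul (σ2 / c ^ 2)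
    rw [hA]
    refine h4.congr_deriv ?_
    have hc0 : c ≠ 0 := hc.ne'
    field_simp
    ring
  have hH : ∀ s ∈ Set.Ioo (0:ℝ) θ, HasDerivAt (fun u => m u * exp (-A u))
      ((∫ ω, -Y ω * exp (-s * Y ω) ∂μ) * exp (-A s)
        + m s * (exp (-A s) * -(σ2 * s * exp (s * c)))) s :=
    fun s hs => ((hderiv s hs).2).mul ((hA' s).neg.exp)
  have hanti : AntitoneOn (fun u => m u * exp (-A u)) (Set.Icc 0 θ) := by
    apply antitoneOn_of_deriv_nonpos (convex_Icc 0 θ)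
    · apply ContinuousOn.mul ?_ (Continuous.continuousOn (by rw [hA]; fun_prop))
      intro s hs
      rw [hm]
      apply continuousWithinAt_of_dominated
        (Filter.Eventually.of_forall fun x => hFmeas x) ?_ hbound_int
        (ae_of_all _ fun ω => Continuous.continuousWithinAt (by fun_prop))
      apply eventually_nhdsWithin_of_forall
      intro x hx
      refine ae_of_all _ fun ω => ?_
      rw [Real.norm_eq_abs, abs_of_pos (exp_pos _)]
      exact hptb x hx ω
    · rw [interior_Icc]
      exact fun x hx => ((hH x hx).differentiableAt).differentiableWithinAt
    · rw [interior_Icc]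
      intro x hx
      rw [(hH x hx).deriv]
      have h1 := hm'le x hx
      have h2 := Real.exp_pos (-A x)
      have h3 : (0:ℝ) ≤ (σ2 * x * exp (x * c) * m x - ∫ ω, -Y ω * exp (-x * Y ω) ∂μ)
          * exp (-A x) := mul_nonneg (by linarith) h2.le
      nlinarith [h3]
  have hmem0 : (0:ℝ) ∈ Set.Icc (0:ℝ) θ := Set.left_mem_Icc.2 hθ.le
  have hmemθ : θ ∈ Set.Icc (0:ℝ) θ := Set.right_mem_Icc.2 hθ.le
  have hfin : m θ * exp (-A θ) ≤ m 0 * exp (-A 0) := hanti hmem0 hmemθ hθ.le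
  have hA0 : A 0 = 0 := by rw [hA]; simp
  have hm0 : m 0 = 1 := by rw [hm]; simp
  rw [hA0, hm0] at hfin
  simp only [neg_zero, Real.exp_zero, mul_one] at hfin
  have hexp : exp (-A θ) * exp (A θ) = 1 := by
    rw [← Real.exp_add]; simp
  have hgoal : m θ ≤ exp (A θ) := by
    nlinarith [hfin, Real.exp_pos (A θ), Real.exp_pos (-A θ)]
  exact hgoal

theorem zero_bias_left_tail_tlogt
    {Ω : Type*} [MeasurableSpace Ω] (μ : Measure Ω) [IsProbabilityMeasure μ]
    (Y Ystar : Ω → ℝ) (hY : Measurable Y) (hYstar : Measurable Ystar)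
    (σ2 : ℝ) (hσ2 : 0 < σ2)
    (hmean : ∫ ω, Y ω ∂μ = 0) (hL2 : MemLp Y 2 μ) (hvar : variance Y μ = σ2)
    (hzb : ZeroBiased μ Y Ystar σ2)
    (c : ℝ) (hc : 0 < c)
    (hbdd : ∀ᵐ ω ∂μ, Y ω - Ystar ω ≤ c)
    (t : ℝ) (ht : Real.exp 1 < t)
    (hmgf : Integrable (fun ω => exp (-((Real.log t - Real.log (Real.log t)) / c) * Y ω)) μ) :
    (μ {ω | Y ω ≤ -t}).toReal ≤
      exp (-(t / c) * (Real.log t - Real.log (Real.log t) - σ2 / c)) := by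
  set θ : ℝ := (Real.log t - Real.log (Real.log t)) / c with hθdef
  have ht0 : 0 < t := (exp_pos 1).trans ht
  have hL1 : 1 < Real.log t := by
    have := Real.log_lt_log (exp_pos 1) ht
    rwa [Real.log_exp] at this
  have hL0 : 0 < Real.log t := lt_trans one_pos hL1
  have hlogL0 : 0 < Real.log (Real.log t) := Real.log_pos hL1
  have hnum : 0 < Real.log t - Real.log (Real.log t) := by
    have := Real.log_le_sub_one_of_pos hL0
    linarith
  have hθpos : 0 < θ := div_pos hnum hc
  have hintY : Integrable Y μ := hL2.integrable one_le_two
  -- Chernoff bound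
  have hcher := measure_le_le_exp_mul_mgf (μ := μ) (X := Y) (t := -θ) (-t)
    (neg_nonpos.2 hθpos.le) (by simpa [neg_mul] using hmgf)
  have hmgfval : mgf Y μ (-θ) = ∫ ω, exp (-θ * Y ω) ∂μ := by
    simp [mgf, neg_mul]
  have hmb := zb_mgf_bound μ Y Ystar hY hYstar σ2 hσ2 hintY hzb c hc hbdd θ hθpos hmgf
  have heθc : exp (θ * c) = t / Real.log t := by
    rw [hθdef, div_mul_cancel₀ _ (ne_of_gt hc), Real.exp_sub, Real.exp_log ht0,
      Real.exp_log hL0]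
  calc (μ {ω | Y ω ≤ -t}).toReal ≤ exp (-(-θ) * -t) * mgf Y μ (-θ) := hcher
    _ ≤ exp (-(θ * t)) * exp (σ2 / c ^ 2 * (exp (θ * c) * (θ * c - 1) + 1)) := by
        rw [hmgfval]
        have he : - -θ * -t = -(θ * t) := by ring
        rw [he]
        exact mul_le_mul_of_nonneg_left hmb (exp_pos _).le
    _ ≤ exp (-(t / c) * (Real.log t - Real.log (Real.log t) - σ2 / c)) := by
        rw [← Real.exp_add, Real.exp_le_exp]
        rw [heθc]
        have hθc : θ * c = Real.log t - Real.log (Real.log t) := by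
          rw [hθdef, div_mul_cancel₀ _ (ne_of_gt hc)]
        -- reduce to (t/log t)*(log t - log log t - 1) + 1 ≤ t
        have key : t / Real.log t * (Real.log t - Real.log (Real.log t) - 1) + 1 ≤ t := by
          have h1 : 1 ≤ t / Real.log t * (Real.log (Real.log t) + 1) := by
            have h2 : (1:ℝ) ≤ t / Real.log t := by
              rw [le_div_iff₀ hL0, one_mul]
              have := Real.log_le_sub_one_of_pos ht0
              linarith
            nlinarith
          have h3 : t / Real.log t * Real.log t = t := by
            field_simp
          nlinarith
        have hθt : θ * t = t / c * (Real.log t - Real.log (Real.log t)) := by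
          rw [hθdef]; ring
        rw [hθc, hθt]
        have h4 : σ2 / c ^ 2 * (t / Real.log t * (Real.log t - Real.log (Real.log t) - 1) + 1)
            ≤ σ2 / c ^ 2 * t :=
          mul_le_mul_of_nonneg_left key (by positivity)
        have h5 : -(t / c) * (Real.log t - Real.log (Real.log t) - σ2 / c)
            = -(t / c * (Real.log t - Real.log (Real.log t))) + σ2 / c ^ 2 * t := by
          field_simp
          ring
        rw [h5]
        linarith
end

section
/- Let Y be a mean zero random variable with variance σ² ∈ (0,∞) satisfying |Y| ≤ c almost surely for some constant c > 0, and let Y* be a random variable having the Y-zero biased distribution. Then |Y*| ≤ c almost surely. -/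
open MeasureTheory ProbabilityTheory Real

/-- Derivative of `x ↦ (max (x - a) 0)^2`. -/
lemma hasDerivAt_maxsq (a x : ℝ) :
    HasDerivAt (fun y => (max (y - a) 0)^2) (2 * max (x - a) 0) x := by
  rcases lt_trichotomy x a with h | h | h
  · have h0 : HasDerivAt (fun _ : ℝ => (0:ℝ)) 0 x := hasDerivAt_const x 0
    have : max (x - a) 0 = 0 := max_eq_right (by linarith)
    rw [this, mul_zero]
    refine h0.congr_of_eventuallyEq ?_
    filter_upwards [eventually_lt_nhds h] with y hy
    simp [max_eq_right (by linarith : y - a ≤ 0)]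
  · subst h
    rw [sub_self, max_self, mul_zero]
    rw [hasDerivAt_iff_tendsto_slope]
    have hb : ∀ᶠ y in nhdsWithin x {x}ᶜ,
        ‖slope (fun y => (max (y - x) 0)^2) x y‖ ≤ |y - x| := by
      filter_upwards [self_mem_nhdsWithin] with y hy
      have hyx : y - x ≠ 0 := sub_ne_zero.mpr hy
      have hs : slope (fun y => (max (y - x) 0)^2) x y = (max (y - x) 0)^2 / (y - x) := by
        rw [slope_def_field]; simp [div_sub_div_same]
      rw [hs, Real.norm_eq_abs, abs_div]
      rw [div_le_iff₀ (abs_pos.mpr hyx)]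
      have h1 : |(max (y - x) 0)^2| = (max (y - x) 0)^2 := abs_of_nonneg (sq_nonneg _)
      rw [h1]
      have h2 : (max (y - x) 0)^2 ≤ (y - x)^2 := by
        rcases le_or_gt (y - x) 0 with h | h
        · simp [max_eq_right h, sq_nonneg]
        · simp [max_eq_left h.le]
      calc (max (y - x) 0)^2 ≤ (y - x)^2 := h2
        _ = |y - x| * |y - x| := by rw [← sq_abs]; ring
    refine squeeze_zero_norm' hb ?_
    have : Filter.Tendsto (fun y : ℝ => |y - x|) (nhds x) (nhds (|x - x|)) :=
      ((continuous_id.sub continuous_const).abs.tendsto x)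
    simpa using this.mono_left nhdsWithin_le_nhds
  · have h1 : HasDerivAt (fun y : ℝ => (y - a)^2) (2 * (x - a)) x := by
      simpa using ((hasDerivAt_id x).sub_const a).fun_pow 2
    have : max (x - a) 0 = x - a := max_eq_left (by linarith)
    rw [this]
    refine h1.congr_of_eventuallyEq ?_
    filter_upwards [eventually_gt_nhds h] with y hy
    simp [max_eq_left (by linarith : (0:ℝ) ≤ y - a)]

/-- One-sided bound: if `Y ≤ c` a.s. then `Ystar ≤ c` a.s. -/
lemma zb_upper {Ω : Type*} [MeasurableSpace Ω] (μ : Measure Ω) [IsProbabilityMeasure μ]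
    (Y Ystar : Ω → ℝ) (hYstar : Measurable Ystar)
    (σ2 : ℝ) (hσ2 : 0 < σ2) (hzb : ZeroBiased μ Y Ystar σ2)
    (c : ℝ) (hbdd : ∀ᵐ ω ∂μ, Y ω ≤ c) : ∀ᵐ ω ∂μ, Ystar ω ≤ c := by
  set f : ℝ → ℝ := fun x => Real.sqrt (1 + (max (x - c) 0)^2) - 1 with hf
  set f' : ℝ → ℝ := fun x => max (x - c) 0 / Real.sqrt (1 + (max (x - c) 0)^2) with hf'
  have hspos : ∀ x : ℝ, (0:ℝ) < Real.sqrt (1 + (max (x - c) 0)^2) := by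
    intro x; apply Real.sqrt_pos.mpr; positivity
  have hderiv : ∀ x, HasDerivAt f (f' x) x := by
    intro x
    have hpos : (0:ℝ) < 1 + (max (x - c) 0)^2 := by positivity
    have h2 : HasDerivAt (fun y => 1 + (max (y - c) 0)^2) (2 * max (x - c) 0) x :=
      (hasDerivAt_maxsq c x).const_add 1
    have h3 := (h2.sqrt (ne_of_gt hpos)).sub_const 1
    have : 2 * max (x - c) 0 / (2 * Real.sqrt (1 + (max (x - c) 0)^2)) = f' x := by
      rw [hf']; rw [mul_div_mul_left _ _ (two_ne_zero)]
    rwa [this] at h3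
  have heq : (fun ω => Y ω * f (Y ω)) =ᵐ[μ] (fun _ => (0:ℝ)) := by
    filter_upwards [hbdd] with ω hω
    have : max (Y ω - c) 0 = 0 := max_eq_right (by linarith)
    simp [hf, this]
  have hint1 : Integrable (fun ω => Y ω * f (Y ω)) μ :=
    (integrable_const (0:ℝ)).congr heq.symm
  have hf'cont : Continuous f' := by
    apply Continuous.div
    · exact (continuous_id.sub continuous_const).max continuous_const
    · exact (continuous_const.add
        (((continuous_id.sub continuous_const).max continuous_const).pow 2)).sqrt
    · intro x; exact ne_of_gt (hspos x)
  have hf'bd : ∀ x, ‖f' x‖ ≤ 1 := by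
    intro x
    rw [Real.norm_eq_abs, hf', abs_div, abs_of_nonneg (le_max_right _ _),
      abs_of_nonneg (hspos x).le, div_le_one (hspos x)]
    calc max (x - c) 0 = Real.sqrt ((max (x - c) 0)^2) := by
          rw [Real.sqrt_sq (le_max_right _ _)]
      _ ≤ Real.sqrt (1 + (max (x - c) 0)^2) := Real.sqrt_le_sqrt (by linarith)
  have hint2 : Integrable (fun ω => f' (Ystar ω)) μ := by
    refine Integrable.mono' (integrable_const (1:ℝ))
      (hf'cont.measurable.comp hYstar).aestronglyMeasurable ?_
    exact Filter.Eventually.of_forall fun ω => hf'bd (Ystar ω)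
  have hkey := hzb f f' hderiv hint1 hint2
  rw [integral_congr_ae heq, integral_const, smul_eq_mul, mul_zero] at hkey
  have hizero : ∫ ω, f' (Ystar ω) ∂μ = 0 := by
    field_simp at hkey
    rcases mul_eq_zero.mp hkey.symm with h | h
    · exact absurd h (ne_of_gt hσ2)
    · exact h
  have hnn : 0 ≤ᵐ[μ] fun ω => f' (Ystar ω) := by
    refine Filter.Eventually.of_forall fun ω => ?_
    exact div_nonneg (le_max_right _ _) (hspos _).le
  have := (integral_eq_zero_iff_of_nonneg_ae hnn hint2).mp hizero
  filter_upwards [this] with ω hω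
  simp only [Pi.zero_apply, hf'] at hω
  have hnum : max (Ystar ω - c) 0 = 0 := by
    rcases div_eq_zero_iff.mp hω with h | h
    · exact h
    · exact absurd h (ne_of_gt (hspos _))
  have := le_max_left (Ystar ω - c) 0
  rw [hnum] at this; linarith

/-- Zero-biasing is preserved under negation. -/
lemma zb_neg {Ω : Type*} [MeasurableSpace Ω] (μ : Measure Ω)
    (Y Ystar : Ω → ℝ) (σ2 : ℝ) (hzb : ZeroBiased μ Y Ystar σ2) :
    ZeroBiased μ (fun ω => -Y ω) (fun ω => -Ystar ω) σ2 := by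
  intro f f' hderiv hint1 hint2
  set g : ℝ → ℝ := fun x => -f (-x) with hg
  set g' : ℝ → ℝ := fun x => f' (-x) with hg'
  have hgderiv : ∀ x, HasDerivAt g (g' x) x := by
    intro x
    have h1 : HasDerivAt (fun x : ℝ => f (-x)) (f' (-x) * (-1)) x :=
      (hderiv (-x)).comp x (hasDerivAt_neg x)
    have h2 := h1.fun_neg
    simpa [hg, hg'] using h2
  have he1 : (fun ω => Y ω * g (Y ω)) = (fun ω => -Y ω * f (-Y ω)) := by
    funext ω; show Y ω * -f (-Y ω) = -Y ω * f (-Y ω); ring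
  have he2 : (fun ω => g' (Ystar ω)) = (fun ω => f' (-Ystar ω)) := by
    funext ω; simp [hg']
  have := hzb g g' hgderiv (he1 ▸ hint1) (he2 ▸ hint2)
  rw [he1, he2] at this
  exact this

theorem zero_bias_bounded
    {Ω : Type*} [MeasurableSpace Ω] (μ : Measure Ω) [IsProbabilityMeasure μ]
    (Y Ystar : Ω → ℝ) (hY : Measurable Y) (hYstar : Measurable Ystar)
    (σ2 : ℝ) (hσ2 : 0 < σ2)
    (hmean : ∫ ω, Y ω ∂μ = 0) (hL2 : MemLp Y 2 μ) (hvar : variance Y μ = σ2)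
    (hzb : ZeroBiased μ Y Ystar σ2)
    (c : ℝ) (hc : 0 < c) (hbdd : ∀ᵐ ω ∂μ, |Y ω| ≤ c) :
    ∀ᵐ ω ∂μ, |Ystar ω| ≤ c := by
  have hub : ∀ᵐ ω ∂μ, Ystar ω ≤ c := by
    refine zb_upper μ Y Ystar hYstar σ2 hσ2 hzb c ?_
    filter_upwards [hbdd] with ω hω
    exact (abs_le.mp hω).2
  have hlb : ∀ᵐ ω ∂μ, -Ystar ω ≤ c := by
    refine zb_upper μ (fun ω => -Y ω) (fun ω => -Ystar ω) hYstar.neg σ2 hσ2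
      (zb_neg μ Y Ystar σ2 hzb) c ?_
    filter_upwards [hbdd] with ω hω
    have := (abs_le.mp hω).1
    linarith
  filter_upwards [hub, hlb] with ω h1 h2
  exact abs_le.mpr ⟨by linarith, h1⟩
end

section
/- Let A = (a_{ij})_{1≤i,j≤n} be an n × n real array with n ≥ 2, let π be a permutation of {1,…,n} chosen uniformly at random, and let Y = Σ_{i=1}^n a_{iπ(i)}. Then Var(Y) = (1/(n−1)) Σ_{1≤i,j≤n} (a_{ij}² − a_{i·}² − a_{·j}² + a_{··}²) = (1/(n−1)) Σ_{1≤i,j≤n} (a_{ij} − a_{i·} − a_{·j} + a_{··})². -/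
open MeasureTheory ProbabilityTheory

noncomputable instance (n : ℕ) : MeasurableSpace (Equiv.Perm (Fin n)) := ⊤

/-- The uniform distribution on the permutations of `{1, …, n}`. -/
noncomputable def uniformPerm (n : ℕ) : Measure (Equiv.Perm (Fin n)) :=
  (PMF.uniformOfFintype (Equiv.Perm (Fin n))).toMeasure

/-- Row mean `a_{i·}`. -/
noncomputable def rowMean (n : ℕ) (a : Fin n → Fin n → ℝ) (i : Fin n) : ℝ :=
  (1 / (n : ℝ)) * ∑ j, a i j

/-- Column mean `a_{·j}`. -/
noncomputable def colMean (n : ℕ) (a : Fin n → Fin n → ℝ) (j : Fin n) : ℝ :=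
  (1 / (n : ℝ)) * ∑ i, a i j

/-- Grand mean `a_{··}`. -/
noncomputable def grandMean (n : ℕ) (a : Fin n → Fin n → ℝ) : ℝ :=
  (1 / (n : ℝ) ^ 2) * ∑ i, ∑ j, a i j

open Finset Equiv

variable {n : ℕ}

-- applying σ to target values preserves fiber card
lemma card_fib_map (i : Fin n) (j : Fin n) (σ : Equiv.Perm (Fin n)) :
    (univ.filter (fun π : Equiv.Perm (Fin n) => π i = j)).card
      = (univ.filter (fun π : Equiv.Perm (Fin n) => π i = σ j)).card := by
  apply Finset.card_bij' (fun π _ => σ * π) (fun π _ => σ⁻¹ * π)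
  · intro π hπ; simp only [mem_filter, mem_univ, true_and] at hπ ⊢
    simp [Equiv.Perm.mul_apply, hπ]
  · intro π hπ; simp only [mem_filter, mem_univ, true_and] at hπ ⊢
    simp [Equiv.Perm.mul_apply, hπ]
  · intro π _; simp [mul_assoc]
  · intro π _; simp [mul_assoc]

lemma card_fib (i j : Fin n) :
    (univ.filter (fun π : Equiv.Perm (Fin n) => π i = j)).card = (n - 1).factorial := by
  have key : ∀ j' : Fin n, (univ.filter (fun π : Equiv.Perm (Fin n) => π i = j)).card
      = (univ.filter (fun π : Equiv.Perm (Fin n) => π i = j')).card := by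
    intro j'
    have := card_fib_map i j (Equiv.swap j j')
    simpa using this
  have hsum : ∑ j' : Fin n, (univ.filter (fun π : Equiv.Perm (Fin n) => π i = j')).card
      = (univ : Finset (Equiv.Perm (Fin n))).card := by
    rw [Finset.card_eq_sum_card_fiberwise (f := fun π : Equiv.Perm (Fin n) => π i)
      (t := univ) (fun x _ => mem_univ _)]
  have hn : 0 < n := i.pos
  have : n * (univ.filter (fun π : Equiv.Perm (Fin n) => π i = j)).card = n.factorial := by
    calc n * _ = ∑ _j' : Fin n, (univ.filter (fun π : Equiv.Perm (Fin n) => π i = j)).card := by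
          simp [mul_comm]
      _ = ∑ j' : Fin n, (univ.filter (fun π : Equiv.Perm (Fin n) => π i = j')).card :=
          Finset.sum_congr rfl (fun j' _ => key j')
      _ = _ := by rw [hsum]; simp [Fintype.card_perm]
  have hfac := Nat.mul_factorial_pred hn.ne'
  have hn' : n ≠ 0 := hn.ne'
  exact Nat.eq_of_mul_eq_mul_left hn (by rw [this, ← hfac])

lemma exists_perm_pair (j l j' l' : Fin n) (h : j ≠ l) (h' : j' ≠ l') :
    ∃ σ : Equiv.Perm (Fin n), σ j = j' ∧ σ l = l' := by
  have hl1 : Equiv.swap j j' l ≠ j' := by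
    rcases eq_or_ne l j' with rfl | hlj'
    · rw [Equiv.swap_apply_right]
      rintro rfl; exact h rfl
    · rwa [Equiv.swap_apply_of_ne_of_ne (Ne.symm h) hlj']
  refine ⟨Equiv.swap (Equiv.swap j j' l) l' * Equiv.swap j j', ?_, ?_⟩
  · simp only [Equiv.Perm.mul_apply, Equiv.swap_apply_left]
    exact Equiv.swap_apply_of_ne_of_ne (Ne.symm hl1) h'
  · simp only [Equiv.Perm.mul_apply, Equiv.swap_apply_left]

lemma card_fib2_map (i k j l : Fin n) (σ : Equiv.Perm (Fin n)) :
    (univ.filter (fun π : Equiv.Perm (Fin n) => π i = j ∧ π k = l)).card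
      = (univ.filter (fun π : Equiv.Perm (Fin n) => π i = σ j ∧ π k = σ l)).card := by
  apply Finset.card_bij' (fun π _ => σ * π) (fun π _ => σ⁻¹ * π)
  · intro π hπ; simp only [mem_filter, mem_univ, true_and] at hπ ⊢
    simp [Equiv.Perm.mul_apply, hπ.1, hπ.2]
  · intro π hπ; simp only [mem_filter, mem_univ, true_and] at hπ ⊢
    constructor
    · simp [Equiv.Perm.mul_apply, hπ.1]
    · simp [Equiv.Perm.mul_apply, hπ.2]
  · intro π _; simp [mul_assoc]
  · intro π _; simp [mul_assoc]

lemma card_fib2 (i k j l : Fin n) (hik : i ≠ k) (hjl : j ≠ l) :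
    (univ.filter (fun π : Equiv.Perm (Fin n) => π i = j ∧ π k = l)).card
      = (n - 2).factorial := by
  have key : ∀ p : Fin n × Fin n, p.1 ≠ p.2 →
      (univ.filter (fun π : Equiv.Perm (Fin n) => π i = j ∧ π k = l)).card
        = (univ.filter (fun π : Equiv.Perm (Fin n) => π i = p.1 ∧ π k = p.2)).card := by
    rintro ⟨j', l'⟩ hp
    obtain ⟨σ, h1, h2⟩ := exists_perm_pair j l j' l' hjl hp
    have := card_fib2_map i k j l σ
    rw [h1, h2] at this; exact this
  have hsum : ∑ p ∈ (univ : Finset (Fin n)).offDiag,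
      (univ.filter (fun π : Equiv.Perm (Fin n) => π i = p.1 ∧ π k = p.2)).card
      = (univ : Finset (Equiv.Perm (Fin n))).card := by
    rw [Finset.card_eq_sum_card_fiberwise (f := fun π : Equiv.Perm (Fin n) => (π i, π k))
      (t := (univ : Finset (Fin n)).offDiag)
      (fun π _ => by simp [Finset.mem_offDiag, hik])]
    apply Finset.sum_congr rfl
    intro p _
    congr 1
    ext π
    simp [Prod.ext_iff]
  have hcard : ((univ : Finset (Fin n)).offDiag).card = n * n - n := by
    simp [Finset.offDiag_card]
  have h2n : 2 ≤ n := by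
    rcases Fin.pos_iff_nonempty.mp i.pos with _
    by_contra h
    interval_cases n
    · exact i.elim0
    · exact hik (Subsingleton.elim i k)
  have hmul : (n * n - n) * (univ.filter (fun π : Equiv.Perm (Fin n) => π i = j ∧ π k = l)).card
      = n.factorial := by
    calc (n * n - n) * _
        = ∑ p ∈ (univ : Finset (Fin n)).offDiag,
            (univ.filter (fun π : Equiv.Perm (Fin n) => π i = j ∧ π k = l)).card := by
          rw [Finset.sum_const, hcard, smul_eq_mul]
      _ = ∑ p ∈ (univ : Finset (Fin n)).offDiag,
            (univ.filter (fun π : Equiv.Perm (Fin n) => π i = p.1 ∧ π k = p.2)).card := by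
          apply Finset.sum_congr rfl
          intro p hp
          exact key p (Finset.mem_offDiag.mp hp).2.2
      _ = _ := by rw [hsum]; simp [Fintype.card_perm]
  have hfac : n.factorial = (n * n - n) * (n - 2).factorial := by
    have h1 : n.factorial = n * (n - 1).factorial := (Nat.mul_factorial_pred (by omega)).symm
    have h2 : (n - 1).factorial = (n - 1) * (n - 2).factorial := by
      have := Nat.mul_factorial_pred (n := n - 1) (by omega)
      rw [show n - 1 - 1 = n - 2 by omega] at this
      omega
    rw [h1, h2, ← mul_assoc]
    congr 1
    rw [Nat.mul_sub, mul_one]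
  have hpos : 0 < n * n - n := by
    rw [show n * n - n = n * (n - 1) from by rw [Nat.mul_sub, mul_one]]
    exact Nat.mul_pos (by omega) (by omega)
  rw [hfac] at hmul
  exact (Nat.eq_of_mul_eq_mul_left hpos hmul)

lemma sum_single (i : Fin n) (g : Fin n → ℝ) :
    ∑ π : Equiv.Perm (Fin n), g (π i) = ((n-1).factorial : ℝ) * ∑ j, g j := by
  rw [← Finset.sum_fiberwise_of_maps_to (g := fun π : Equiv.Perm (Fin n) => π i)
    (t := univ) (fun x _ => mem_univ _)]
  rw [Finset.mul_sum]
  apply Finset.sum_congr rfl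
  intro j _
  rw [Finset.sum_congr rfl (fun π hπ => by
    rw [(Finset.mem_filter.mp hπ).2]), Finset.sum_const, card_fib]
  simp [mul_comm]

lemma sum_pair (i k : Fin n) (hik : i ≠ k) (h : Fin n → Fin n → ℝ) :
    ∑ π : Equiv.Perm (Fin n), h (π i) (π k)
      = ((n-2).factorial : ℝ) * ((∑ j, ∑ l, h j l) - ∑ j, h j j) := by
  have hoff : (univ : Finset (Fin n)).offDiag = univ.filter (fun p => p.1 ≠ p.2) := by
    ext p; simp [Finset.mem_offDiag]
  rw [← Finset.sum_fiberwise_of_maps_to (g := fun π : Equiv.Perm (Fin n) => (π i, π k))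
    (t := (univ : Finset (Fin n)).offDiag)
    (fun π _ => by simp [Finset.mem_offDiag, hik])]
  have step1 : ∀ p ∈ (univ : Finset (Fin n)).offDiag,
      ∑ π ∈ univ.filter (fun π : Equiv.Perm (Fin n) => (π i, π k) = p), h (π i) (π k)
        = ((n-2).factorial : ℝ) * h p.1 p.2 := by
    intro p hp
    rw [Finset.sum_congr rfl (fun π hπ => by
      have := (Finset.mem_filter.mp hπ).2
      rw [show π i = p.1 from congrArg Prod.fst this,
          show π k = p.2 from congrArg Prod.snd this]), Finset.sum_const]
    have : (univ.filter (fun π : Equiv.Perm (Fin n) => (π i, π k) = p)).card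
        = (n-2).factorial := by
      have heq : univ.filter (fun π : Equiv.Perm (Fin n) => (π i, π k) = p)
          = univ.filter (fun π : Equiv.Perm (Fin n) => π i = p.1 ∧ π k = p.2) := by
        ext π; simp [Prod.ext_iff]
      rw [heq]
      exact card_fib2 i k p.1 p.2 hik (Finset.mem_offDiag.mp hp).2.2
    rw [this]; simp [mul_comm]
  rw [Finset.sum_congr rfl step1, ← Finset.mul_sum]
  congr 1
  rw [hoff, Finset.sum_filter]
  rw [show ∑ p : Fin n × Fin n, (if p.1 ≠ p.2 then h p.1 p.2 else 0)
      = ∑ p : Fin n × Fin n, (h p.1 p.2 - if p.1 = p.2 then h p.1 p.2 else 0) from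
    Finset.sum_congr rfl (fun p _ => by by_cases hc : p.1 = p.2 <;> simp [hc])]
  rw [Finset.sum_sub_distrib]
  congr 1
  · rw [Fintype.sum_prod_type]
  · rw [Fintype.sum_prod_type]
    apply Finset.sum_congr rfl
    intro j _
    simp

lemma sum_erase_eq (X : Fin n → Fin n → ℝ) :
    ∑ i, ∑ k ∈ univ.erase i, X i k = (∑ i, ∑ k, X i k) - ∑ i, X i i := by
  rw [← Finset.sum_sub_distrib]
  apply Finset.sum_congr rfl
  intro i _
  have := Finset.add_sum_erase univ (X i) (mem_univ i)
  linarith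

lemma sum_perm_linear (a : Fin n → Fin n → ℝ) :
    ∑ π : Equiv.Perm (Fin n), (∑ i, a i (π i))
      = ((n-1).factorial : ℝ) * ∑ i, ∑ j, a i j := by
  rw [Finset.sum_comm, Finset.mul_sum]
  exact Finset.sum_congr rfl (fun i _ => sum_single i (a i))

lemma sum_perm_sq (hn : 2 ≤ n) (a : Fin n → Fin n → ℝ) :
    ∑ π : Equiv.Perm (Fin n), (∑ i, a i (π i))^2
      = ((n-1).factorial : ℝ) * (∑ i, ∑ j, (a i j)^2)
        + ((n-2).factorial : ℝ) * ((∑ i, ∑ j, a i j)^2 - (∑ i, (∑ j, a i j)^2)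
            - (∑ j, (∑ i, a i j)^2) + ∑ i, ∑ j, (a i j)^2) := by
  have step1 : ∑ π : Equiv.Perm (Fin n), (∑ i, a i (π i))^2
      = ∑ i, ∑ k, ∑ π : Equiv.Perm (Fin n), a i (π i) * a k (π k) := by
    calc ∑ π : Equiv.Perm (Fin n), (∑ i, a i (π i))^2
        = ∑ π : Equiv.Perm (Fin n), ∑ i, ∑ k, a i (π i) * a k (π k) := by
          apply Finset.sum_congr rfl
          intro π _
          rw [sq, Finset.sum_mul_sum]
      _ = ∑ i, ∑ π : Equiv.Perm (Fin n), ∑ k, a i (π i) * a k (π k) := Finset.sum_comm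
      _ = _ := Finset.sum_congr rfl (fun i _ => Finset.sum_comm)
  rw [step1]
  have step2 : ∀ i : Fin n, ∑ k, ∑ π : Equiv.Perm (Fin n), a i (π i) * a k (π k)
      = ((n-1).factorial : ℝ) * (∑ j, (a i j)^2)
        + ∑ k ∈ univ.erase i, ((n-2).factorial : ℝ) *
            ((∑ j, a i j) * (∑ l, a k l) - ∑ j, a i j * a k j) := by
    intro i
    rw [← Finset.add_sum_erase univ _ (mem_univ i)]
    congr 1
    · rw [sum_single i (fun j => a i j * a i j)]
      congr 1
      exact Finset.sum_congr rfl (fun j _ => (sq (a i j)).symm ▸ by ring)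
    · apply Finset.sum_congr rfl
      intro k hk
      have hik : i ≠ k := (Finset.ne_of_mem_erase hk).symm
      rw [sum_pair i k hik (fun x y => a i x * a k y)]
      congr 1
      rw [Finset.sum_mul_sum]
  rw [Finset.sum_congr rfl (fun i _ => step2 i)]
  rw [Finset.sum_add_distrib, ← Finset.mul_sum]
  congr 1
  have hc : ∑ x : Fin n, ∑ k ∈ univ.erase x,
      ((n-2).factorial : ℝ) * ((∑ j, a x j) * (∑ l, a k l) - ∑ j, a x j * a k j)
      = ((n-2).factorial : ℝ) * ∑ x : Fin n, ∑ k ∈ univ.erase x,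
          ((∑ j, a x j) * (∑ l, a k l) - ∑ j, a x j * a k j) := by
    rw [Finset.mul_sum]
    exact Finset.sum_congr rfl (fun x _ => (Finset.mul_sum _ _ _).symm)
  rw [hc, sum_erase_eq]
  have h1 : ∑ x : Fin n, ∑ k : Fin n,
      ((∑ j, a x j) * (∑ l, a k l) - ∑ j, a x j * a k j)
      = (∑ i, ∑ j, a i j)^2 - ∑ j, (∑ i, a i j)^2 := by
    rw [show ∑ x : Fin n, ∑ k : Fin n,
        ((∑ j, a x j) * (∑ l, a k l) - ∑ j, a x j * a k j)
        = (∑ x : Fin n, ∑ k : Fin n, (∑ j, a x j) * (∑ l, a k l))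
          - ∑ x : Fin n, ∑ k : Fin n, ∑ j, a x j * a k j from by
      rw [← Finset.sum_sub_distrib]
      exact Finset.sum_congr rfl (fun x _ => Finset.sum_sub_distrib _ _)]
    congr 1
    · rw [sq, Finset.sum_mul_sum]
    · calc ∑ x : Fin n, ∑ k : Fin n, ∑ j, a x j * a k j
          = ∑ x : Fin n, ∑ j, ∑ k : Fin n, a x j * a k j :=
            Finset.sum_congr rfl (fun x _ => Finset.sum_comm)
        _ = ∑ j, ∑ x : Fin n, ∑ k : Fin n, a x j * a k j := Finset.sum_comm
        _ = ∑ j, (∑ i, a i j)^2 := by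
            apply Finset.sum_congr rfl
            intro j _
            rw [sq, Finset.sum_mul_sum]
  have h2 : ∑ x : Fin n, ((∑ j, a x j) * (∑ l, a x l) - ∑ j, a x j * a x j)
      = (∑ i, (∑ j, a i j)^2) - ∑ i, ∑ j, (a i j)^2 := by
    rw [← Finset.sum_sub_distrib]
    apply Finset.sum_congr rfl
    intro x _
    rw [sq]
    congr 1
    exact Finset.sum_congr rfl (fun j _ => by rw [sq])
  rw [h1, h2]
  ring

lemma adj_eq (hn : 0 < n) (a : Fin n → Fin n → ℝ) :
    ∑ i, ∑ j, (a i j - rowMean n a i - colMean n a j + grandMean n a)^2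
      = ∑ i, ∑ j, ((a i j)^2 - (rowMean n a i)^2 - (colMean n a j)^2
          + (grandMean n a)^2) := by
  have hn' : (n : ℝ) ≠ 0 := Nat.cast_ne_zero.mpr hn.ne'
  set r := rowMean n a with hr
  set c := colMean n a with hc
  set g := grandMean n a with hg
  have F1 : ∀ i, ∑ j, a i j = n * r i := by
    intro i; rw [hr, rowMean]; field_simp
  have F2 : ∀ j, ∑ i, a i j = n * c j := by
    intro j; rw [hc, colMean]; field_simp
  have F3 : ∑ j, c j = n * g := by
    rw [hc, hg]; unfold colMean grandMean
    rw [← Finset.mul_sum, Finset.sum_comm]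
    field_simp
  have F4 : ∑ i, r i = n * g := by
    rw [hr, hg]; unfold rowMean grandMean
    rw [← Finset.mul_sum]
    field_simp
  rw [← sub_eq_zero, ← Finset.sum_sub_distrib]
  have inner : ∀ i, (∑ j, (a i j - r i - c j + g)^2)
      - (∑ j, ((a i j)^2 - (r i)^2 - (c j)^2 + g^2))
      = 2*((∑ j, (c j)^2) - (∑ j, a i j * c j) + (n:ℝ) * r i * g - n * g^2) := by
    intro i
    rw [← Finset.sum_sub_distrib]
    have expand : ∀ j, (a i j - r i - c j + g)^2
        - ((a i j)^2 - (r i)^2 - (c j)^2 + g^2)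
        = 2*((r i)^2 + (c j)^2 - a i j * r i - a i j * c j + a i j * g
            + r i * c j - r i * g - c j * g) := fun j => by ring
    rw [Finset.sum_congr rfl (fun j _ => expand j), ← Finset.mul_sum]
    congr 1
    simp only [Finset.sum_add_distrib, Finset.sum_sub_distrib, Finset.sum_const,
      Finset.card_univ, Fintype.card_fin, nsmul_eq_mul, ← Finset.sum_mul, ← Finset.mul_sum]
    rw [F1 i, F3]
    ring
  rw [Finset.sum_congr rfl (fun i _ => inner i)]
  have swap : ∑ i, ∑ j, a i j * c j = (n:ℝ) * ∑ j, (c j)^2 := by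
    rw [Finset.sum_comm]
    rw [Finset.mul_sum]
    apply Finset.sum_congr rfl
    intro j _
    rw [← Finset.sum_mul, F2 j]
    ring
  simp only [Finset.sum_add_distrib, Finset.sum_sub_distrib, Finset.sum_const,
    Finset.card_univ, Fintype.card_fin, nsmul_eq_mul, ← Finset.mul_sum, ← Finset.sum_mul]
  rw [show (∑ i, ∑ j, a i j * c j) = (n:ℝ) * ∑ j, (c j)^2 from swap] <;> try skip
  rw [F4]
  ring

lemma rhs_closed (hn : 0 < n) (a : Fin n → Fin n → ℝ) :
    ∑ i, ∑ j, ((a i j)^2 - (rowMean n a i)^2 - (colMean n a j)^2 + (grandMean n a)^2)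
      = (∑ i, ∑ j, (a i j)^2) - (1/(n:ℝ)) * (∑ i, (∑ j, a i j)^2)
        - (1/(n:ℝ)) * (∑ j, (∑ i, a i j)^2)
        + (1/(n:ℝ)^2) * (∑ i, ∑ j, a i j)^2 := by
  have hn' : (n : ℝ) ≠ 0 := Nat.cast_ne_zero.mpr hn.ne'
  simp only [rowMean, colMean, grandMean, Finset.sum_add_distrib, Finset.sum_sub_distrib,
    Finset.sum_const, Finset.card_univ, Fintype.card_fin, nsmul_eq_mul, mul_pow,
    ← Finset.mul_sum]
  field_simp

theorem hoeffding_variance (n : ℕ) (hn : 2 ≤ n) (a : Fin n → Fin n → ℝ) :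
    variance (fun p : Equiv.Perm (Fin n) => ∑ i, a i (p i)) (uniformPerm n) =
        (1 / ((n : ℝ) - 1)) * ∑ i, ∑ j,
          ((a i j) ^ 2 - (rowMean n a i) ^ 2 - (colMean n a j) ^ 2 +
            (grandMean n a) ^ 2) ∧
      variance (fun p : Equiv.Perm (Fin n) => ∑ i, a i (p i)) (uniformPerm n) =
        (1 / ((n : ℝ) - 1)) * ∑ i, ∑ j,
          (a i j - rowMean n a i - colMean n a j + grandMean n a) ^ 2 := by
  have hnpos : 0 < n := by omega
  have hne : Nonempty (Equiv.Perm (Fin n)) := ⟨1⟩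
  have hprob : IsProbabilityMeasure (uniformPerm n) := by
    unfold uniformPerm; infer_instance
  have hint : ∀ f : Equiv.Perm (Fin n) → ℝ,
      ∫ p, f p ∂(uniformPerm n) = (n.factorial : ℝ)⁻¹ * ∑ p : Equiv.Perm (Fin n), f p := by
    intro f
    rw [uniformPerm, PMF.integral_eq_sum]
    simp [PMF.uniformOfFintype_apply, ENNReal.toReal_inv, Finset.mul_sum, Fintype.card_perm]
  set X := fun p : Equiv.Perm (Fin n) => ∑ i, a i (p i) with hXdef
  have hX : MemLp X 2 (uniformPerm n) := MemLp.of_discrete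
  have hvar := variance_eq_sub hX
  have hEX : ∫ p, X p ∂(uniformPerm n)
      = (n.factorial : ℝ)⁻¹ * (((n-1).factorial : ℝ) * ∑ i, ∑ j, a i j) := by
    rw [hint, sum_perm_linear]
  have hEX2 : ∫ p, (X ^ 2) p ∂(uniformPerm n)
      = (n.factorial : ℝ)⁻¹ *
        (((n-1).factorial : ℝ) * (∑ i, ∑ j, (a i j)^2)
          + ((n-2).factorial : ℝ) * ((∑ i, ∑ j, a i j)^2 - (∑ i, (∑ j, a i j)^2)
              - (∑ j, (∑ i, a i j)^2) + ∑ i, ∑ j, (a i j)^2)) := by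
    have hXsq : (X ^ 2) = fun p => (X p)^2 := rfl
    rw [hXsq, hint]
    rw [hXdef]
    rw [sum_perm_sq hn a]
  have e1 : (n.factorial : ℝ) = (n : ℝ) * ((n-1).factorial : ℝ) := by
    exact_mod_cast (Nat.mul_factorial_pred hnpos.ne').symm
  have e2 : ((n-1).factorial : ℝ) = ((n : ℝ) - 1) * ((n-2).factorial : ℝ) := by
    have h := Nat.mul_factorial_pred (n := n - 1) (by omega)
    rw [show n - 1 - 1 = n - 2 by omega] at h
    have : ((n-1).factorial : ℝ) = ((n-1 : ℕ) : ℝ) * ((n-2).factorial : ℝ) := by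
      exact_mod_cast h.symm
    rw [this, Nat.cast_sub (by omega)]
    norm_num
  have hn0 : (n : ℝ) ≠ 0 := Nat.cast_ne_zero.mpr hnpos.ne'
  have hn1 : (n : ℝ) - 1 ≠ 0 := by
    have : (2 : ℝ) ≤ (n : ℝ) := by exact_mod_cast hn
    linarith
  have hf2 : ((n-2).factorial : ℝ) ≠ 0 := by
    exact_mod_cast (Nat.factorial_pos (n-2)).ne'
  have key : variance X (uniformPerm n) =
      (1 / ((n : ℝ) - 1)) * ((∑ i, ∑ j, (a i j)^2)
        - (1/(n:ℝ)) * (∑ i, (∑ j, a i j)^2)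
        - (1/(n:ℝ)) * (∑ j, (∑ i, a i j)^2)
        + (1/(n:ℝ)^2) * (∑ i, ∑ j, a i j)^2) := by
    rw [hvar, hEX2, hEX, e1, e2]
    field_simp
    ring
  constructor
  · rw [key, rhs_closed hnpos a]
  · rw [key, adj_eq hnpos a, rhs_closed hnpos a]
end
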